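/- arXiv:1606.02926 — 2 statements merged into one kernel-verified Lean document; each statement's English description precedes it below -/
import Mathlib

section
/- Let G be a forest and (G, P⃗, 𝓛) a promise structure, where P⃗ = {p⃗_i : i ∈ I} and 𝓛 = {L_i : i ∈ I}. Then there exists a forest cl(G) containing G as an induced subgraph such that: (1) cl(G) is an 𝓛_q-extension of G, where 𝓛_q is the union of those L_i for which p⃗_i is not a placeholder-promise; (2) for every i ∈ I and every ℓ ∈ L_i, the rooted trees cl(G)(p⃗_i) and cl(G)(q⃗_ℓ) are isomorphic as rooted trees; and (3) cl(G) has the same maximum degree as G. -/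
/-- A leaf of a graph: a vertex with exactly one neighbour. -/
def IsLeaf {V : Type} (G : SimpleGraph V) (v : V) : Prop :=
  (G.neighborSet v).ncard = 1

/-- The vertex set of the component of `G − xy` containing `y`, i.e. the underlying
vertex set of the rooted tree `G(x→y)` (rooted at `y`). -/
def branchSet {V : Type} (G : SimpleGraph V) (x y : V) : Set V :=
  {z | (G.deleteEdges {s(x, y)}).Reachable y z}

/-- The rooted trees `G(x→y)` and `H(x'→y')` are isomorphic as rooted trees, i.e. there
is a graph isomorphism between the corresponding induced subgraphs mapping root `y` to
root `y'`. -/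
def BranchRootedIso {V W : Type} (G : SimpleGraph V) (x y : V)
    (H : SimpleGraph W) (x' y' : W) : Prop :=
  ∃ φ : G.induce (branchSet G x y) ≃g H.induce (branchSet H x' y'),
    ∀ h : y ∈ branchSet G x y, ((φ ⟨y, h⟩ : branchSet H x' y') : W) = y'

/-- The promise edge `p⃗ᵢ` is a placeholder-promise: the component `G(p⃗ᵢ)` consists of
a single leaf belonging to `Lᵢ`. -/
def IsPlaceholder {V I : Type} (G : SimpleGraph V) (p : I → V × V) (L : I → Set V)
    (i : I) : Prop :=
  (p i).2 ∈ L i ∧ branchSet G (p i).1 (p i).2 = {(p i).2}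

/-- `H` is an `L`-extension of the forest `G`, where `G` is included in `H` as an
induced subgraph via `ι`: every component of `H` contains precisely one component of
`G`, and every path in `H` from a vertex of `G` to a vertex outside `G` meets `L`. -/
def IsLeafExtension {V W : Type} (G : SimpleGraph V) (H : SimpleGraph W)
    (ι : V ↪ W) (L : Set V) : Prop :=
  (∀ a b : V, H.Adj (ι a) (ι b) ↔ G.Adj a b) ∧
  (∀ w : W, ∃ v : V, H.Reachable w (ι v)) ∧
  (∀ v v' : V, H.Reachable (ι v) (ι v') → G.Reachable v v') ∧
  (∀ w : W, w ∉ Set.range ι → ∀ g : V, ∀ q : H.Walk (ι g) w, q.IsPath →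
    ∃ l ∈ L, ι l ∈ q.support)

namespace PromiseClosure

open SimpleGraph List

variable {V I : Type}

/-! ### Generic lemmas about `branchSet` -/

lemma branch_self (G : SimpleGraph V) (x y : V) : y ∈ branchSet G x y :=
  Reachable.refl y

lemma branch_closed {G : SimpleGraph V} {x y v z : V} (hv : v ∈ branchSet G x y)
    (hadj : G.Adj v z) (hne : s(v, z) ≠ s(x, y)) : z ∈ branchSet G x y :=
  Reachable.trans hv (SimpleGraph.Adj.reachable
    (by rw [SimpleGraph.deleteEdges_adj]; exact ⟨hadj, by simpa using hne⟩))

lemma src_not_mem_branch {G : SimpleGraph V} (hG : G.IsAcyclic) {x y : V}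
    (hxy : G.Adj x y) : x ∉ branchSet G x y := by
  intro h
  exact ((SimpleGraph.isBridge_iff).1
    ((SimpleGraph.isAcyclic_iff_forall_adj_isBridge).1 hG hxy)) h.symm

lemma branch_of_nbr_singleton {G : SimpleGraph V} {u ℓ : V}
    (h : G.neighborSet ℓ = {u}) : branchSet G u ℓ = {ℓ} := by
  ext z
  constructor
  · rintro ⟨w⟩
    cases w with
    | nil => rfl
    | cons h' q =>
      rw [SimpleGraph.deleteEdges_adj] at h'
      have hb : _ ∈ G.neighborSet ℓ := h'.1
      rw [h, Set.mem_singleton_iff] at hb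
      subst hb
      exact absurd (by simp [Sym2.eq_swap]) h'.2
  · rintro rfl
    exact branch_self G u _

lemma nbr_singleton_of_leaf {G : SimpleGraph V} {ℓ x : V} (hl : IsLeaf G ℓ)
    (hx : G.Adj x ℓ) : G.neighborSet ℓ = {x} := by
  obtain ⟨a, ha⟩ := Set.ncard_eq_one.1 hl
  have : x ∈ G.neighborSet ℓ := hx.symm
  rw [ha, Set.mem_singleton_iff] at this
  rw [ha, this]

/-- Transport reachability along a map which sends edges to edges or collapses them. -/
lemma reach_proj {α β : Type} {A : SimpleGraph α} {Bg : SimpleGraph β} (f : α → β)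
    (h : ∀ a b : α, A.Adj a b → f a = f b ∨ Bg.Adj (f a) (f b)) {a b : α}
    (hr : A.Reachable a b) : Bg.Reachable (f a) (f b) := by
  obtain ⟨w⟩ := hr
  induction w with
  | nil => rfl
  | cons h' q ih =>
    rcases h _ _ h' with he | he
    · rw [he]; exact ih
    · exact he.reachable.trans ih

/-! ### The data of a promise structure -/

structure Setup (V I : Type) where
  G : SimpleGraph V
  hG : G.IsAcyclic
  p : I → V × V
  hp : ∀ i, G.Adj (p i).1 (p i).2
  L : I → Set V
  hleaf : ∀ i, ∀ ℓ ∈ L i, IsLeaf G ℓ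
  hdisj : Pairwise fun i j => Disjoint (L i) (L j)

namespace Setup

variable (S : Setup V I)

/-- Labels: promise leaves of non-placeholder promises. -/
def D := {x : I × V // x.2 ∈ S.L x.1 ∧ ¬ IsPlaceholder S.G S.p S.L x.1}

def lf (d : S.D) : V := d.val.2
def rt (d : S.D) : V := (S.p d.val.1).2
def src (d : S.D) : V := (S.p d.val.1).1
def Bd (d : S.D) : Set V := branchSet S.G (S.src d) (S.rt d)

variable {S}

lemma lf_mem (d : S.D) : S.lf d ∈ S.L d.val.1 := d.property.1

lemma adj_src_rt (d : S.D) : S.G.Adj (S.src d) (S.rt d) := S.hp d.val.1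

lemma rt_mem_Bd (d : S.D) : S.rt d ∈ S.Bd d := branch_self _ _ _

lemma src_not_mem_Bd (d : S.D) : S.src d ∉ S.Bd d :=
  src_not_mem_branch S.hG (adj_src_rt d)

lemma lf_leaf (d : S.D) : IsLeaf S.G (S.lf d) := S.hleaf _ _ (lf_mem d)

/-- Labels with the same leaf are equal. -/
lemma labelEq {d e : S.D} (h : S.lf d = S.lf e) : d = e := by
  have hi : d.val.1 = e.val.1 := by
    by_contra hne
    exact Set.not_disjoint_iff.2 ⟨S.lf d, lf_mem d, h ▸ lf_mem e⟩ (S.hdisj hne)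
  exact Subtype.ext (Prod.ext hi h)

/-- If the root of a promise edge is itself a promise leaf of some label, then its
branch is a singleton. -/
lemma Bd_singleton_of_leaf {d : S.D} (h : IsLeaf S.G (S.rt d)) :
    S.Bd d = {S.rt d} :=
  branch_of_nbr_singleton (nbr_singleton_of_leaf h (adj_src_rt d))

/-- No label's leaf can equal the root of a label whose branch has a non-root
element. -/
lemma lf_ne_rt {d e : S.D} {x : V} (hx : x ∈ S.Bd e) (hxr : x ≠ S.rt e) :
    S.lf d ≠ S.rt e := by
  intro h
  have : S.Bd e = {S.rt e} := Bd_singleton_of_leaf (h ▸ lf_leaf d)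
  rw [this, Set.mem_singleton_iff] at hx
  exact hxr hx


open scoped Classical

/-! ### The closure graph -/

variable (S)

/-- Validity of a chain of labels: each leaf lies in the branch of the next label. -/
def Ok (s : List S.D) : Prop := List.Chain' (fun d e => S.lf d ∈ S.Bd e) s

/-- Valid vertices of the closure. -/
def Valid : List S.D × V → Prop
  | ([], _) => True
  | (d :: t, v) => v ∈ S.Bd d ∧ v ≠ S.rt d ∧ S.Ok (d :: t)

/-- Vertices of the closure. -/
def W := {x : List S.D × V // S.Valid x}

/-- Collapse of a formal pair to the vertex it represents (the root of a copy is
identified with the leaf the copy is glued to). -/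
noncomputable def rep : List S.D → V → List S.D × V
  | [], v => ([], v)
  | e :: t, v => if v = S.rt e then rep t (S.lf e) else (e :: t, v)

/-- Gluing edges: `b` lies in a copy, adjacent to the root, and `a` is the vertex the
root is identified with. -/
def Glue (a b : List S.D × V) : Prop :=
  ∃ (d : S.D) (c : List S.D), b.1 = d :: c ∧ a = S.rep c (S.lf d) ∧ S.G.Adj (S.rt d) b.2

/-- Adjacency in the closure. -/
def Adj0 (a b : List S.D × V) : Prop :=
  (a.1 = b.1 ∧ S.G.Adj a.2 b.2) ∨ S.Glue a b ∨ S.Glue b a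

/-- The label just above `c` in a chain having `c` as a proper suffix. -/
noncomputable def above (c : List S.D) : List S.D → Option S.D
  | [] => none
  | f :: t => if t = c then some f else above c t

/-- Projection of the closure onto the branch of the copy with chain `c`. -/
noncomputable def rho (c : List S.D) (vdef : V) (x : List S.D × V) : V :=
  if x.1 = c then x.2
  else match S.above c x.1 with
    | some f => S.lf f
    | none => vdef

variable {S}

lemma rep_nil (v : V) : S.rep [] v = ([], v) := rfl

lemma rep_cons (e : S.D) (t : List S.D) (v : V) :
    S.rep (e :: t) v = if v = S.rt e then S.rep t (S.lf e) else (e :: t, v) := rfl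

lemma above_nil_def (c : List S.D) : S.above c [] = none := rfl

lemma above_cons (c : List S.D) (f : S.D) (t : List S.D) :
    S.above c (f :: t) = if t = c then some f else S.above c t := rfl

lemma rep_len : ∀ (s : List S.D) (y : V), (S.rep s y).1.length ≤ s.length := by
  intro s
  induction s with
  | nil => intro y; rw [rep_nil]
  | cons e t ih =>
    intro y
    rw [rep_cons]
    split
    · exact le_trans (ih _) (Nat.le_succ _)
    · exact le_refl _

lemma adj0_symm {a b : List S.D × V} (h : S.Adj0 a b) : S.Adj0 b a := by
  rcases h with ⟨h1, h2⟩ | h | h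
  exacts [Or.inl ⟨h1.symm, h2.symm⟩, Or.inr (Or.inr h), Or.inr (Or.inl h)]

lemma not_glue_self (b : List S.D × V) : ¬ S.Glue b b := by
  rintro ⟨d, c, hc, hr, -⟩
  have h1 : b.1.length = c.length + 1 := by rw [hc]; simp
  have h2 : b.1.length ≤ c.length := by rw [hr]; exact rep_len c _
  omega

lemma adj0_irrefl (a : List S.D × V) : ¬ S.Adj0 a a := by
  rintro (⟨-, h⟩ | h | h)
  · exact S.G.loopless.irrefl _ h
  · exact not_glue_self _ h
  · exact not_glue_self _ h

variable (S)

/-- The closure graph. -/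
noncomputable def H : SimpleGraph S.W where
  Adj a b := S.Adj0 a.val b.val
  symm := ⟨fun _ _ h => adj0_symm h⟩
  loopless := ⟨fun a h => adj0_irrefl a.val h⟩

/-- The embedding of the original forest into the closure. -/
def emb : V ↪ S.W :=
  ⟨fun v => ⟨([], v), trivial⟩, fun a b h => by
    simpa using congrArg (fun w : S.W => w.val.2) h⟩

variable {S}

lemma H_adj {a b : S.W} : (S.H).Adj a b ↔ S.Adj0 a.val b.val := Iff.rfl

lemma emb_val (v : V) : (S.emb v).val = ([], v) := rfl

lemma ne_of_len {c s : List S.D} (h : s.length < c.length) : s ≠ c := by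
  intro he; rw [he] at h; omega

lemma above_short {c : List S.D} : ∀ s : List S.D, s.length ≤ c.length →
    S.above c s = none := by
  intro s
  induction s with
  | nil => intro _; rfl
  | cons f t ih =>
    intro h
    simp only [List.length_cons] at h
    rw [above_cons, if_neg (ne_of_len (by omega)), ih (by omega)]

lemma rho_eq_of_chain {c : List S.D} {vdef : V} {x : List S.D × V} (h : x.1 = c) :
    S.rho c vdef x = x.2 := by
  simp only [Setup.rho]
  rw [if_pos h]

lemma rho_eq_of_above {c : List S.D} {vdef : V} {x : List S.D × V} (h : x.1 ≠ c)
    {f : S.D} (ha : S.above c x.1 = some f) : S.rho c vdef x = S.lf f := by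
  simp only [Setup.rho]
  rw [if_neg h, ha]

lemma rho_eq_of_none {c : List S.D} {vdef : V} {x : List S.D × V} (h : x.1 ≠ c)
    (ha : S.above c x.1 = none) : S.rho c vdef x = vdef := by
  simp only [Setup.rho]
  rw [if_neg h, ha]

lemma rho_rep {c : List S.D} {vdef : V} (hv : ∀ d t, c = d :: t → vdef = S.rt d) :
    ∀ (s : List S.D) (y : V), S.rho c vdef (S.rep s y) = S.rho c vdef (s, y) := by
  intro s
  induction s with
  | nil => intro y; rw [rep_nil]
  | cons e t ih =>
    intro y
    rw [rep_cons]
    split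
    · next hy =>
      rw [ih]
      subst hy
      by_cases h1 : e :: t = c
      · rw [rho_eq_of_chain (show ((e :: t, S.rt e) : List S.D × V).1 = c from h1)]
        have hlen : t.length < c.length := by rw [← h1]; simp
        rw [rho_eq_of_none (ne_of_len hlen) (above_short t (by omega))]
        exact hv e t h1.symm
      · by_cases h2 : t = c
        · rw [rho_eq_of_chain (show ((t, S.lf e) : List S.D × V).1 = c from h2),
            rho_eq_of_above h1 (by rw [above_cons, if_pos h2])]
        · by_cases h3 : S.above c t = none
          · rw [rho_eq_of_none h2 h3, rho_eq_of_none h1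
              (by rw [above_cons, if_neg h2]; exact h3)]
          · obtain ⟨f, hf⟩ := Option.ne_none_iff_exists'.1 h3
            rw [rho_eq_of_above h2 hf, rho_eq_of_above h1
              (by rw [above_cons, if_neg h2]; exact hf)]
    · rfl

lemma rho_rep_tail {d : S.D} {t : List S.D} {vdef : V} :
    S.rho (d :: t) vdef (S.rep t (S.lf d)) = vdef := by
  have h := rep_len t (S.lf d)
  rw [rho_eq_of_none (ne_of_len (by simp only [List.length_cons]; omega))
    (above_short _ (by simp only [List.length_cons]; omega))]

/-- The projection compatibility of edges of the closure. -/
lemma adj_rho {c : List S.D} {vdef : V} (hv : ∀ d t, c = d :: t → vdef = S.rt d)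
    {a b : List S.D × V} (hab : S.Adj0 a b) :
    S.rho c vdef a = S.rho c vdef b
    ∨ (a.1 = c ∧ b.1 = c ∧ S.G.Adj a.2 b.2)
    ∨ (∃ d t, c = d :: t ∧ a = S.rep t (S.lf d) ∧ b.1 = c ∧ S.G.Adj (S.rt d) b.2)
    ∨ (∃ d t, c = d :: t ∧ b = S.rep t (S.lf d) ∧ a.1 = c ∧ S.G.Adj (S.rt d) a.2) := by
  have key : ∀ a b : List S.D × V, S.Glue a b →
      S.rho c vdef a = S.rho c vdef b
      ∨ (∃ d t, c = d :: t ∧ a = S.rep t (S.lf d) ∧ b.1 = c ∧ S.G.Adj (S.rt d) b.2) := by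
    rintro a b ⟨d, t, hb1, ha, hadj⟩
    by_cases h : d :: t = c
    · exact Or.inr ⟨d, t, h.symm, by rw [ha], hb1.trans h, hadj⟩
    · left
      rw [ha, rho_rep hv]
      by_cases h2 : t = c
      · rw [rho_eq_of_chain (show ((t, S.lf d) : List S.D × V).1 = c from h2),
          rho_eq_of_above (show b.1 ≠ c by rw [hb1]; exact h)
            (by rw [hb1, above_cons, if_pos h2])]
      · by_cases h3 : S.above c t = none
        · rw [rho_eq_of_none h2 h3, rho_eq_of_none (show b.1 ≠ c by rw [hb1]; exact h)
            (by rw [hb1, above_cons, if_neg h2]; exact h3)]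
        · obtain ⟨f, hf⟩ := Option.ne_none_iff_exists'.1 h3
          rw [rho_eq_of_above h2 hf, rho_eq_of_above (show b.1 ≠ c by rw [hb1]; exact h)
            (by rw [hb1, above_cons, if_neg h2]; exact hf)]
  rcases hab with ⟨h1, h2⟩ | h | h
  · by_cases h : a.1 = c
    · exact Or.inr (Or.inl ⟨h, h1 ▸ h, h2⟩)
    · left
      by_cases h3 : S.above c a.1 = none
      · rw [rho_eq_of_none h h3, rho_eq_of_none (h1 ▸ h) (h1 ▸ h3)]
      · obtain ⟨f, hf⟩ := Option.ne_none_iff_exists'.1 h3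
        rw [rho_eq_of_above h hf, rho_eq_of_above (h1 ▸ h) (h1 ▸ hf)]
  · rcases key a b h with h' | h'
    exacts [Or.inl h', Or.inr (Or.inr (Or.inl h'))]
  · rcases key b a h with h' | h'
    exacts [Or.inl h'.symm, Or.inr (Or.inr (Or.inr h'))]

/-! ### The base projection -/

variable (S)

/-- The projection of a closure vertex to the original vertex its component is
attached to. -/
noncomputable def base (x : List S.D × V) : V := S.rho [] x.2 x

variable {S}

lemma base_def (x : List S.D × V) : S.base x = S.rho [] x.2 x := rfl

lemma above_nil : ∀ (f : S.D) (t : List S.D),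
    S.above [] (f :: t) = some ((f :: t).getLast (by simp)) := by
  intro f t
  induction t generalizing f with
  | nil => rw [above_cons, if_pos rfl]; simp
  | cons g t' ih =>
    rw [above_cons, if_neg (by simp), ih g]
    congr 1

@[simp] lemma base_nil (v : V) : S.base ([], v) = v := rho_eq_of_chain rfl

lemma base_eq_getLast {s : List S.D} (h : s ≠ []) (v : V) :
    S.base (s, v) = S.lf (s.getLast h) := by
  cases s with
  | nil => exact absurd rfl h
  | cons f t => exact rho_eq_of_above (by simp) (above_nil f t)

lemma base_eq_rho (vdef : V) (x : List S.D × V) : S.rho [] vdef x = S.base x := by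
  rcases x with ⟨s, v⟩
  cases s with
  | nil => exact (rho_eq_of_chain rfl).trans (base_nil v).symm
  | cons f t =>
    exact (rho_eq_of_above (by simp) (above_nil f t)).trans
      (base_eq_getLast (by simp) v).symm

lemma base_rep (s : List S.D) (y : V) : S.base (S.rep s y) = S.base (s, y) := by
  rw [← base_eq_rho y, ← base_eq_rho y]
  exact rho_rep (by intro d t h; cases h) s y

lemma base_cons (d : S.D) (t : List S.D) (v : V) :
    S.base (d :: t, v) = S.base (t, S.lf d) := by
  cases t with
  | nil =>
    rw [base_nil]
    exact base_eq_getLast (by simp) v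
  | cons f t' =>
    rw [base_eq_getLast (by simp : (d :: f :: t' : List S.D) ≠ []),
      base_eq_getLast (by simp : (f :: t' : List S.D) ≠ [])]
    exact congrArg S.lf (List.getLast_cons (by simp))

lemma base_concat : ∀ (s : List S.D) (v : V) (f : S.D), S.base (s ++ [f], v) = S.lf f := by
  intro s
  induction s with
  | nil =>
    intro v f
    rw [List.nil_append]
    exact base_eq_getLast (by simp) v
  | cons d s ih =>
    intro v f
    rw [List.cons_append, base_cons, ih]

/-! ### Validity lemmas -/

lemma rep_valid : ∀ (s : List S.D) (y : V), S.Ok s →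
    (∀ f t, s = f :: t → y ∈ S.Bd f) → S.Valid (S.rep s y) := by
  intro s
  induction s with
  | nil => intro y _ _; rw [rep_nil]; trivial
  | cons e t ih =>
    intro y hok hy
    rw [rep_cons]
    split
    · next hr =>
      refine ih _ hok.tail ?_
      intro f t' ht'
      subst ht'
      exact (List.isChain_cons_cons.1 hok).1
    · next hr => exact ⟨hy e t rfl, hr, hok⟩

lemma rep_top : ∀ (s : List S.D) (d : S.D) {z : V}, S.rep s (S.lf d) = ([], z) →
    ∃ f : S.D, z = S.lf f := by
  intro s
  induction s with
  | nil =>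
    intro d z h
    rw [rep_nil] at h
    exact ⟨d, by cases h; rfl⟩
  | cons e t ih =>
    intro d z h
    rw [rep_cons] at h
    split at h
    · exact ih e h
    · simp at h

/-! ### Reachability in the closure -/

lemma valid_of_chain {x : List S.D × V} (hx : S.Valid x) {d : S.D} {t : List S.D}
    (h : x.1 = d :: t) : x.2 ∈ S.Bd d ∧ x.2 ≠ S.rt d ∧ S.Ok (d :: t) := by
  rcases x with ⟨s, v⟩
  dsimp at h
  subst h
  exact hx

lemma wext {a b : S.W} (h : a.val = b.val) : a = b := Subtype.ext h

variable (S)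

/-- The part of the closure graph avoiding edges between two original vertices. -/
noncomputable def Hside : SimpleGraph S.W where
  Adj a b := S.Adj0 a.val b.val ∧ (a.val.1 ≠ [] ∨ b.val.1 ≠ [])
  symm := ⟨fun _ _ h => ⟨adj0_symm h.1, h.2.symm⟩⟩
  loopless := ⟨fun a h => adj0_irrefl a.val h.1⟩

variable {S}

lemma hside_le : S.Hside ≤ S.H := fun _ _ h => h.1

lemma hside_le_del {x y : V} :
    S.Hside ≤ (S.H).deleteEdges {s(S.emb x, S.emb y)} := by
  intro a b h
  rw [SimpleGraph.deleteEdges_adj]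
  refine ⟨h.1, ?_⟩
  intro hmem
  rw [Set.mem_singleton_iff, Sym2.eq_iff] at hmem
  rcases h.2 with hne | hne
  · rcases hmem with ⟨ha, -⟩ | ⟨ha, -⟩ <;>
      exact hne (by rw [ha]; rfl)
  · rcases hmem with ⟨-, hb⟩ | ⟨-, hb⟩ <;>
      exact hne (by rw [hb]; rfl)

lemma climb {d : S.D} {t : List S.D} (hpv : S.Valid (S.rep t (S.lf d))) :
    ∀ (v z : V) (q : (S.G.deleteEdges {s(S.src d, S.rt d)}).Walk v z)
      (hz : z = S.rt d) (hval : S.Valid (d :: t, v)),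
      S.Hside.Reachable ⟨(d :: t, v), hval⟩ ⟨S.rep t (S.lf d), hpv⟩ := by
  intro v z q
  induction q with
  | nil => intro hz hval; exact absurd hz hval.2.1
  | @cons v b _ h q' ih =>
    intro hz hval
    rw [SimpleGraph.deleteEdges_adj] at h
    by_cases hb : b = S.rt d
    · subst hb
      refine SimpleGraph.Adj.reachable ?_
      refine ⟨Or.inr (Or.inr ⟨d, t, rfl, rfl, h.1.symm⟩), Or.inl (by simp)⟩
    · have hmem : b ∈ S.Bd d := ⟨(q'.copy rfl hz).reverse⟩
      have hval₁ : S.Valid (d :: t, b) := ⟨hmem, hb, hval.2.2⟩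
      refine Reachable.trans (SimpleGraph.Adj.reachable ?_) (ih hz hval₁)
      exact ⟨Or.inl ⟨rfl, h.1⟩, Or.inl (by simp)⟩

lemma descent : ∀ (n : ℕ) (w : S.W), w.val.1.length = n →
    S.Hside.Reachable w (S.emb (S.base w.val)) := by
  intro n
  induction n using Nat.strong_induction_on with
  | _ n ih =>
    rintro ⟨⟨s, v⟩, hval⟩ hn
    cases s with
    | nil =>
      rw [base_nil]
      exact Reachable.refl _
    | cons d t =>
      obtain ⟨hv, hr, hok⟩ := hval
      have hpv : S.Valid (S.rep t (S.lf d)) := by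
        refine rep_valid t _ hok.tail ?_
        intro f t' ht'
        subst ht'
        exact (List.isChain_cons_cons.1 hok).1
      obtain ⟨q⟩ := (hv : (S.G.deleteEdges _).Reachable (S.rt d) v).symm
      have h1 := climb hpv v _ q rfl ⟨hv, hr, hok⟩
      have hlen : (S.rep t (S.lf d)).1.length < n := by
        have := rep_len t (S.lf d)
        simp only [List.length_cons] at hn
        omega
      have h2 := ih _ hlen ⟨S.rep t (S.lf d), hpv⟩ rfl
      have hbeq : S.base (S.rep t (S.lf d)) = S.base (d :: t, v) := by
        rw [base_rep, base_cons]
      rw [hbeq] at h2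
      exact h1.trans h2

lemma reach_base (w : S.W) : (S.H).Reachable w (S.emb (S.base w.val)) :=
  (descent _ w rfl).mono hside_le

lemma base_chain_nil {x : List S.D × V} (h : x.1 = []) : S.base x = x.2 :=
  rho_eq_of_chain h

lemma adj_base {a b : S.W} (h : (S.H).Adj a b) :
    S.base a.val = S.base b.val ∨ S.G.Adj (S.base a.val) (S.base b.val) := by
  rcases adj_rho (c := ([] : List S.D)) (vdef := S.base a.val)
      (by intro d t h'; cases h') h with
    h' | ⟨h1, h2, h3⟩ | ⟨d, t, hc, -⟩ | ⟨d, t, hc, -⟩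
  · left
    rw [base_eq_rho, base_eq_rho] at h'
    exact h'
  · right
    rw [base_chain_nil h1, base_chain_nil h2]
    exact h3
  · cases hc
  · cases hc

lemma pext {x y : List S.D × V} (h1 : x.1 = y.1) (h2 : x.2 = y.2) : x = y := by
  rcases x with ⟨s, v⟩
  rcases y with ⟨s', v'⟩
  dsimp at h1 h2
  rw [h1, h2]

lemma reach_emb {v v' : V} (h : (S.H).Reachable (S.emb v) (S.emb v')) :
    S.G.Reachable v v' := by
  have := reach_proj (f := fun w : S.W => S.base w.val)
    (fun a b hab => adj_base hab) h
  simpa [emb_val] using this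

lemma lift_reach_del {x y v v' : V}
    (h : (S.G.deleteEdges {s(x, y)}).Reachable v v') :
    ((S.H).deleteEdges {s(S.emb x, S.emb y)}).Reachable (S.emb v) (S.emb v') := by
  refine reach_proj (f := S.emb) ?_ h
  intro a b hab
  rw [SimpleGraph.deleteEdges_adj] at hab
  right
  rw [SimpleGraph.deleteEdges_adj]
  refine ⟨Or.inl ⟨rfl, hab.1⟩, ?_⟩
  intro hmem
  rw [Set.mem_singleton_iff, Sym2.eq_iff] at hmem
  refine hab.2 (Set.mem_singleton_iff.2 ?_)
  rcases hmem with ⟨h1, h2⟩ | ⟨h1, h2⟩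
  · rw [Sym2.eq_iff]
    exact Or.inl ⟨S.emb.injective h1, S.emb.injective h2⟩
  · rw [Sym2.eq_iff]
    exact Or.inr ⟨S.emb.injective h1, S.emb.injective h2⟩

/-- Computation of branches in the closure over an edge of the original forest. -/
lemma branch_H {x y : V} :
    branchSet (S.H) (S.emb x) (S.emb y) = {w : S.W | S.base w.val ∈ branchSet S.G x y} := by
  ext w
  constructor
  · intro hw
    have hkey : ∀ a b : S.W, ((S.H).deleteEdges {s(S.emb x, S.emb y)}).Adj a b →
        S.base a.val = S.base b.val ∨
          (S.G.deleteEdges {s(x, y)}).Adj (S.base a.val) (S.base b.val) := by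
      intro a b hab
      rw [SimpleGraph.deleteEdges_adj] at hab
      rcases adj_rho (c := ([] : List S.D)) (vdef := S.base a.val)
          (by intro d t h'; cases h') hab.1 with
        h' | ⟨h1, h2, h3⟩ | ⟨d, t, hc, -⟩ | ⟨d, t, hc, -⟩
      · left
        rw [base_eq_rho, base_eq_rho] at h'
        exact h'
      · right
        rw [SimpleGraph.deleteEdges_adj]
        rw [base_chain_nil h1, base_chain_nil h2]
        refine ⟨h3, ?_⟩
        intro hmem
        rw [Set.mem_singleton_iff, Sym2.eq_iff] at hmem
        refine hab.2 (Set.mem_singleton_iff.2 ?_)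
        have hav : a.val = ([], a.val.2) := by
          rcases a with ⟨⟨s, vv⟩, hh⟩; dsimp at h1 ⊢; rw [h1]
        have hbv : b.val = ([], b.val.2) := by
          rcases b with ⟨⟨s, vv⟩, hh⟩; dsimp at h2 ⊢; rw [h2]
        rcases hmem with ⟨h1', h2'⟩ | ⟨h1', h2'⟩
        · rw [Sym2.eq_iff]
          exact Or.inl ⟨wext (by rw [hav, h1']; rfl), wext (by rw [hbv, h2']; rfl)⟩
        · rw [Sym2.eq_iff]
          exact Or.inr ⟨wext (by rw [hav, h1']; rfl), wext (by rw [hbv, h2']; rfl)⟩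
      · cases hc
      · cases hc
    have := reach_proj (f := fun w : S.W => S.base w.val) hkey hw
    simpa [emb_val, branchSet] using this
  · intro hw
    have h1 : ((S.H).deleteEdges {s(S.emb x, S.emb y)}).Reachable (S.emb y)
        (S.emb (S.base w.val)) := lift_reach_del hw
    exact h1.trans ((descent _ w rfl).mono hside_le_del).symm

/-! ### Acyclicity -/

lemma no_reach_del {c : List S.D} {vdef : V} (hv : ∀ d t, c = d :: t → vdef = S.rt d)
    {a b : S.W} {α β : V}
    (hα : S.rho c vdef a.val = α) (hβ : S.rho c vdef b.val = β) (hadj : S.G.Adj α β)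
    (hinj : ∀ a' b' : S.W, (S.H).Adj a' b' →
      s(S.rho c vdef a'.val, S.rho c vdef b'.val) = s(α, β) → s(a', b') = s(a, b))
    (hre : ((S.H).deleteEdges {s(a, b)}).Reachable a b) : False := by
  have hbr := (SimpleGraph.isAcyclic_iff_forall_adj_isBridge.1 S.hG hadj)
  apply (SimpleGraph.isBridge_iff.1 hbr)
  have := reach_proj (Bg := S.G.deleteEdges {s(α, β)})
    (f := fun w : S.W => S.rho c vdef w.val) ?_ hre
  · have this2 : (S.G.deleteEdges {s(α, β)}).Reachable (S.rho c vdef a.val)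
        (S.rho c vdef b.val) := this
    rw [hα, hβ] at this2
    exact this2
  · intro a' b' hab'
    rw [SimpleGraph.deleteEdges_adj] at hab'
    have hGadj : S.rho c vdef a'.val = S.rho c vdef b'.val ∨
        S.G.Adj (S.rho c vdef a'.val) (S.rho c vdef b'.val) := by
      rcases adj_rho hv hab'.1 with h' | ⟨h1, h2, h3⟩ | ⟨d, t, hc, ha', hb', hadj'⟩ |
        ⟨d, t, hc, hb', ha', hadj'⟩
      · exact Or.inl h'
      · right
        rw [rho_eq_of_chain h1, rho_eq_of_chain h2]
        exact h3
      · right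
        have e1 : S.rho c vdef a'.val = vdef := by rw [ha', hc]; exact rho_rep_tail
        rw [e1, hv d t hc, rho_eq_of_chain hb']
        exact hadj'
      · right
        have e1 : S.rho c vdef b'.val = vdef := by rw [hb', hc]; exact rho_rep_tail
        rw [e1, hv d t hc, rho_eq_of_chain ha']
        exact hadj'.symm
    rcases hGadj with h' | h'
    · exact Or.inl h'
    · right
      rw [SimpleGraph.deleteEdges_adj]
      refine ⟨h', ?_⟩
      intro hmem
      rw [Set.mem_singleton_iff] at hmem
      exact hab'.2 (Set.mem_singleton_iff.2 (hinj a' b' hab'.1 hmem))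

lemma glue_bridge : ∀ a b : S.W, S.Glue a.val b.val →
    ((S.H).deleteEdges {s(a, b)}).Reachable a b → False := by
  rintro a b ⟨d, t, hb1, ha, hadj0⟩ hre
  have vb := valid_of_chain b.property hb1
  have hv : ∀ d' t', (d :: t : List S.D) = d' :: t' → S.rt d = S.rt d' := by
    intro d' t' h; cases h; rfl
  refine no_reach_del (c := d :: t) (vdef := S.rt d) hv
    (by rw [ha]; exact rho_rep_tail) (rho_eq_of_chain hb1) hadj0 ?_ hre
  intro a' b' hab' heq
  rcases adj_rho (c := d :: t) (vdef := S.rt d) hv hab' with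
    h' | ⟨h1, h2, h3⟩ | ⟨d', t', hc', ha'', hb'', hadj''⟩ | ⟨d', t', hc', hb'', ha'', hadj''⟩
  · rw [← h', Sym2.eq_iff] at heq
    rcases heq with ⟨e1, e2⟩ | ⟨e2, e1⟩ <;> exact absurd (e1.symm.trans e2).symm vb.2.1
  · have va' := valid_of_chain a'.property h1
    have vb' := valid_of_chain b'.property h2
    rw [rho_eq_of_chain h1, rho_eq_of_chain h2, Sym2.eq_iff] at heq
    rcases heq with ⟨e1, e2⟩ | ⟨e1, e2⟩
    · exact absurd e1 va'.2.1
    · exact absurd e2 vb'.2.1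
  · injection hc' with hd ht
    subst hd; subst ht
    have e1 : S.rho (d :: t) (S.rt d) a'.val = S.rt d := by
      rw [ha'']; exact rho_rep_tail
    rw [e1, rho_eq_of_chain hb'', Sym2.eq_iff] at heq
    rcases heq with ⟨-, e2⟩ | ⟨e1', -⟩
    · have hbb : b' = b := wext (pext (hb''.trans hb1.symm) e2)
      have haa : a' = a := wext (ha''.trans ha.symm)
      rw [hbb, haa]
    · exact absurd e1'.symm vb.2.1
  · injection hc' with hd ht
    subst hd; subst ht
    have va' := valid_of_chain a'.property ha''
    have e1 : S.rho (d :: t) (S.rt d) b'.val = S.rt d := by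
      rw [hb'']; exact rho_rep_tail
    rw [e1, rho_eq_of_chain ha'', Sym2.eq_iff] at heq
    rcases heq with ⟨e1', -⟩ | ⟨e1', -⟩
    · exact absurd e1' va'.2.1
    · have hbb : a' = b := wext (pext (ha''.trans hb1.symm) e1')
      have haa : b' = a := wext (hb''.trans ha.symm)
      rw [hbb, haa, Sym2.eq_swap]

theorem H_isAcyclic : (S.H).IsAcyclic := by
  rw [SimpleGraph.isAcyclic_iff_forall_adj_isBridge]
  intro a b hab
  rw [SimpleGraph.isBridge_iff]
  intro hre
  have hre' : ((S.H).deleteEdges {s(a, b)}).Reachable a b := hre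
  rcases hab with ⟨hch, hadj⟩ | hg | hg
  · rcases hcs : a.val.1 with _ | ⟨d, t⟩
    · -- top-level edge
      have hbch : b.val.1 = ([] : List S.D) := hch.symm.trans hcs
      refine no_reach_del (c := ([] : List S.D)) (vdef := a.val.2)
        (by intro d t h; cases h) (rho_eq_of_chain hcs) (rho_eq_of_chain hbch) hadj ?_ hre'
      intro a' b' hab' heq
      rcases adj_rho (c := ([] : List S.D)) (vdef := a.val.2)
          (by intro d t h; cases h) hab' with
        h' | ⟨h1, h2, h3⟩ | ⟨d, t, hc', -⟩ | ⟨d, t, hc', -⟩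
      · rw [← h', Sym2.eq_iff] at heq
        rcases heq with ⟨e1, e2⟩ | ⟨e2, e1⟩ <;> exact absurd (e1.symm.trans e2) hadj.ne
      · rw [rho_eq_of_chain h1, rho_eq_of_chain h2, Sym2.eq_iff] at heq
        rcases heq with ⟨e1, e2⟩ | ⟨e1, e2⟩
        · have haa : a' = a := wext (pext (h1.trans hcs.symm) e1)
          have hbb : b' = b := wext (pext (h2.trans hbch.symm) e2)
          rw [haa, hbb]
        · have haa : a' = b := wext (pext (h1.trans hbch.symm) e1)
          have hbb : b' = a := wext (pext (h2.trans hcs.symm) e2)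
          rw [haa, hbb, Sym2.eq_swap]
      · cases hc'
      · cases hc'
    · -- edge inside a copy
      have va := valid_of_chain a.property hcs
      have hbch : b.val.1 = d :: t := hch.symm.trans hcs
      have vb := valid_of_chain b.property hbch
      have hv : ∀ d' t', (d :: t : List S.D) = d' :: t' → S.rt d = S.rt d' := by
        intro d' t' h; cases h; rfl
      refine no_reach_del (c := d :: t) (vdef := S.rt d) hv
        (rho_eq_of_chain hcs) (rho_eq_of_chain hbch) hadj ?_ hre'
      intro a' b' hab' heq
      rcases adj_rho (c := d :: t) (vdef := S.rt d) hv hab' with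
        h' | ⟨h1, h2, h3⟩ | ⟨d', t', hc', ha'', hb'', hadj''⟩ | ⟨d', t', hc', hb'', ha'', hadj''⟩
      · rw [← h', Sym2.eq_iff] at heq
        rcases heq with ⟨e1, e2⟩ | ⟨e2, e1⟩ <;> exact absurd (e1.symm.trans e2) hadj.ne
      · rw [rho_eq_of_chain h1, rho_eq_of_chain h2, Sym2.eq_iff] at heq
        rcases heq with ⟨e1, e2⟩ | ⟨e1, e2⟩
        · have haa : a' = a := wext (pext (h1.trans hcs.symm) e1)
          have hbb : b' = b := wext (pext (h2.trans hbch.symm) e2)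
          rw [haa, hbb]
        · have haa : a' = b := wext (pext (h1.trans hbch.symm) e1)
          have hbb : b' = a := wext (pext (h2.trans hcs.symm) e2)
          rw [haa, hbb, Sym2.eq_swap]
      · injection hc' with hd ht
        subst hd; subst ht
        have e1 : S.rho (d :: t) (S.rt d) a'.val = S.rt d := by
          rw [ha'']; exact rho_rep_tail
        rw [e1, rho_eq_of_chain hb'', Sym2.eq_iff] at heq
        rcases heq with ⟨e1', -⟩ | ⟨e1', -⟩
        · exact absurd e1'.symm va.2.1
        · exact absurd e1'.symm vb.2.1
      · injection hc' with hd ht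
        subst hd; subst ht
        have e1 : S.rho (d :: t) (S.rt d) b'.val = S.rt d := by
          rw [hb'']; exact rho_rep_tail
        rw [e1, rho_eq_of_chain ha'', Sym2.eq_iff] at heq
        rcases heq with ⟨-, e2'⟩ | ⟨-, e2'⟩
        · exact absurd e2'.symm vb.2.1
        · exact absurd e2'.symm va.2.1
  · exact glue_bridge a b hg hre'
  · refine glue_bridge b a hg ?_
    have : ({s(a, b)} : Set (Sym2 S.W)) = {s(b, a)} := by rw [Sym2.eq_swap]
    rw [← this]
    exact hre'.symm

/-! ### Extension lemmas -/

lemma adj_emb_iff (a b : V) : (S.H).Adj (S.emb a) (S.emb b) ↔ S.G.Adj a b := by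
  constructor
  · rintro (⟨-, h⟩ | ⟨d, t, hc, -⟩ | ⟨d, t, hc, -⟩)
    · exact h
    · simp [emb_val] at hc
    · simp [emb_val] at hc
  · intro h
    exact Or.inl ⟨rfl, h⟩

lemma mem_range_emb {w : S.W} : w ∈ Set.range S.emb ↔ w.val.1 = [] := by
  constructor
  · rintro ⟨v, rfl⟩
    rfl
  · intro h
    exact ⟨w.val.2, wext (pext h.symm rfl)⟩

lemma val_pair_of_nil {w : S.W} (h : w.val.1 = []) : w.val = ([], w.val.2) := by
  rcases w with ⟨⟨s, v⟩, hv⟩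
  dsimp at h ⊢
  rw [h]

lemma walk_meets : ∀ {w₁ w₂ : S.W} (q : (S.H).Walk w₁ w₂), w₁.val.1 = [] →
    w₂.val.1 ≠ [] → ∃ d : S.D, S.emb (S.lf d) ∈ q.support := by
  intro w₁ w₂ q
  induction q with
  | nil => intro h1 h2; exact absurd h1 h2
  | @cons u m w h q' ih =>
    intro h1 h2
    by_cases hm : m.val.1 = []
    · obtain ⟨d, hd⟩ := ih hm h2
      exact ⟨d, by rw [SimpleGraph.Walk.support_cons]; exact List.mem_cons_of_mem _ hd⟩
    · rcases h with ⟨hch, -⟩ | ⟨d, t, hc, ha, -⟩ | ⟨d, t, hc, -, -⟩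
      · exact absurd (h1 ▸ hch).symm hm
      · have hx : u.val = (([] : List S.D), u.val.2) := val_pair_of_nil h1
        have hrep : S.rep t (S.lf d) = ([], u.val.2) := ha.symm.trans hx
        obtain ⟨f, hf⟩ := rep_top t d hrep
        refine ⟨f, ?_⟩
        have hu : S.emb (S.lf f) = u := wext (by rw [emb_val, ← hf]; exact (val_pair_of_nil h1).symm)
        show S.emb (S.lf f) ∈ u :: q'.support
        rw [hu]
        exact List.mem_cons_self
      · rw [h1] at hc
        exact absurd hc (by simp)

/-! ### The branch isomorphism -/

section Phi

variable (f₀ : S.D)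

open scoped Classical in
/-- Pushing a vertex of the closure into the copy glued at the leaf of `f₀`. -/
noncomputable def phi (x : List S.D × V) : List S.D × V :=
  if x.1 = [] then (if x.2 = S.rt f₀ then ([], S.lf f₀) else ([f₀], x.2))
  else (x.1 ++ [f₀], x.2)

open scoped Classical in
/-- Inverse of `phi`. -/
noncomputable def psi (x : List S.D × V) : List S.D × V :=
  if x.1 = [] then ([], S.rt f₀) else (x.1.dropLast, x.2)

variable {f₀}

lemma phi_cases (x : List S.D × V) :
    (x.1 = [] ∧ x.2 = S.rt f₀ ∧ phi f₀ x = ([], S.lf f₀)) ∨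
    (x.1 = [] ∧ x.2 ≠ S.rt f₀ ∧ phi f₀ x = ([f₀], x.2)) ∨
    (x.1 ≠ [] ∧ phi f₀ x = (x.1 ++ [f₀], x.2)) := by
  by_cases h1 : x.1 = []
  · by_cases h2 : x.2 = S.rt f₀
    · exact Or.inl ⟨h1, h2, by rw [Setup.phi, if_pos h1, if_pos h2]⟩
    · exact Or.inr (Or.inl ⟨h1, h2, by rw [Setup.phi, if_pos h1, if_neg h2]⟩)
  · exact Or.inr (Or.inr ⟨h1, by rw [Setup.phi, if_neg h1]⟩)

lemma nil_ne_concat (l : List S.D) (f : S.D) : ([] : List S.D) ≠ l ++ [f] := by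
  intro h
  have := congrArg List.length h
  rw [List.length_append] at this
  simp at this

lemma singleton_eq_concat {l : List S.D} {f g : S.D} (h : [g] = l ++ [f]) :
    l = [] ∧ g = f := by
  cases l with
  | nil =>
    rw [List.nil_append] at h
    injection h with h1 h2
    exact ⟨rfl, h1⟩
  | cons a t =>
    exfalso
    have := congrArg List.length h
    rw [List.length_append] at this
    simp at this

lemma phi_inj : Function.Injective (phi f₀) := by
  intro x y h
  rcases phi_cases (f₀ := f₀) x with ⟨hx1, hx2, hx3⟩ | ⟨hx1, hx2, hx3⟩ | ⟨hx1, hx3⟩ <;>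
    rcases phi_cases (f₀ := f₀) y with ⟨hy1, hy2, hy3⟩ | ⟨hy1, hy2, hy3⟩ | ⟨hy1, hy3⟩ <;>
    rw [hx3, hy3] at h
  · exact pext (hx1.trans hy1.symm) (hx2.trans hy2.symm)
  · exact absurd ((Prod.ext_iff.1 h).1 : ([] : List S.D) = [f₀]) (by simp)
  · exact absurd ((Prod.ext_iff.1 h).1 : ([] : List S.D) = y.1 ++ [f₀]) (nil_ne_concat _ _)
  · exact absurd ((Prod.ext_iff.1 h).1 : [f₀] = ([] : List S.D)) (by simp)
  · exact pext (hx1.trans hy1.symm) ((Prod.ext_iff.1 h).2 : x.2 = y.2)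
  · exact absurd (singleton_eq_concat ((Prod.ext_iff.1 h).1 : [f₀] = y.1 ++ [f₀])).1 hy1
  · exact absurd ((Prod.ext_iff.1 h).1 : x.1 ++ [f₀] = ([] : List S.D)).symm (nil_ne_concat _ _)
  · exact absurd (singleton_eq_concat (((Prod.ext_iff.1 h).1 : x.1 ++ [f₀] = [f₀])).symm).1 hx1
  · exact pext (List.append_cancel_right ((Prod.ext_iff.1 h).1 : x.1 ++ [f₀] = y.1 ++ [f₀]))
      ((Prod.ext_iff.1 h).2 : x.2 = y.2)

lemma rep_concat : ∀ (s : List S.D) (y : V), S.rep (s ++ [f₀]) y = phi f₀ (S.rep s y) := by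
  intro s
  induction s with
  | nil =>
    intro y
    rw [List.nil_append, rep_nil, rep_cons]
    by_cases h : y = S.rt f₀
    · rw [if_pos h, rep_nil, Setup.phi, if_pos rfl, if_pos h]
    · rw [if_neg h, Setup.phi, if_pos rfl, if_neg h]
  | cons e s ih =>
    intro y
    rw [List.cons_append, rep_cons, rep_cons]
    by_cases h : y = S.rt e
    · rw [if_pos h, if_pos h, ih]
    · rw [if_neg h, if_neg h, Setup.phi, if_neg (by simp)]
      rfl

lemma adj0_phi {a b : List S.D × V} (h : S.Adj0 a b) : S.Adj0 (phi f₀ a) (phi f₀ b) := by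
  have glue_case : ∀ a b : List S.D × V, S.Glue a b → S.Glue (phi f₀ a) (phi f₀ b) := by
    rintro a b ⟨d, t, hb1, ha, hadj⟩
    have hbne : b.1 ≠ [] := by rw [hb1]; simp
    have hb3 : phi f₀ b = (b.1 ++ [f₀], b.2) := by rw [Setup.phi, if_neg hbne]
    refine ⟨d, t ++ [f₀], ?_, ?_, ?_⟩
    · rw [hb3, hb1]; rfl
    · rw [ha, rep_concat]
    · rw [hb3]; exact hadj
  rcases h with ⟨hch, hadj⟩ | hg | hg
  · by_cases h0 : a.1 = []
    · have hb0 : b.1 = [] := hch ▸ h0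
      by_cases ha2 : a.2 = S.rt f₀
      · by_cases hb2 : b.2 = S.rt f₀
        · exact absurd (ha2 ▸ hb2 ▸ hadj) (S.G.loopless.irrefl _)
        · refine Or.inr (Or.inl ⟨f₀, [], ?_, ?_, ?_⟩)
          · rw [Setup.phi, if_pos hb0, if_neg hb2]
          · rw [Setup.phi, if_pos h0, if_pos ha2, rep_nil]
          · rw [Setup.phi, if_pos hb0, if_neg hb2]
            have := hadj
            rw [ha2] at this
            exact this
      · by_cases hb2 : b.2 = S.rt f₀
        · refine Or.inr (Or.inr ⟨f₀, [], ?_, ?_, ?_⟩)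
          · rw [Setup.phi, if_pos h0, if_neg ha2]
          · rw [Setup.phi, if_pos hb0, if_pos hb2, rep_nil]
          · rw [Setup.phi, if_pos h0, if_neg ha2]
            have := hadj.symm
            rw [hb2] at this
            exact this
        · refine Or.inl ⟨?_, ?_⟩
          · rw [Setup.phi, if_pos h0, if_neg ha2, Setup.phi, if_pos hb0, if_neg hb2]
          · rw [Setup.phi, if_pos h0, if_neg ha2, Setup.phi, if_pos hb0, if_neg hb2]
            exact hadj
    · have hb0 : b.1 ≠ [] := hch ▸ h0
      refine Or.inl ⟨?_, ?_⟩
      · rw [Setup.phi, if_neg h0, Setup.phi, if_neg hb0, hch]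
      · rw [Setup.phi, if_neg h0, Setup.phi, if_neg hb0]
        exact hadj
  · exact Or.inr (Or.inl (glue_case _ _ hg))
  · exact Or.inr (Or.inr (glue_case _ _ hg))

lemma adj0_phi_rev {a b : List S.D × V} (h : S.Adj0 (phi f₀ a) (phi f₀ b)) :
    S.Adj0 a b := by
  have glue_case : ∀ a b : List S.D × V, S.Glue (phi f₀ a) (phi f₀ b) → S.Adj0 a b := by
    rintro a b ⟨d, t, hb1, ha, hadj⟩
    rcases phi_cases (f₀ := f₀) b with ⟨h1, h2, h3⟩ | ⟨h1, h2, h3⟩ | ⟨h1, h3⟩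
    · rw [h3] at hb1
      exact absurd (hb1 : ([] : List S.D) = d :: t) (by simp)
    · rw [h3] at hb1
      have hb1' : [f₀] = d :: t := hb1
      injection hb1' with e1 e2
      subst e1
      subst e2
      rw [rep_nil] at ha
      rcases phi_cases (f₀ := f₀) a with ⟨g1, g2, g3⟩ | ⟨g1, g2, g3⟩ | ⟨g1, g3⟩
      · refine Or.inl ⟨g1.trans h1.symm, ?_⟩
        rw [g2]
        rw [h3] at hadj
        exact hadj
      · rw [g3] at ha
        have ha' : ([f₀] : List S.D) = [] := (Prod.ext_iff.1 ha).1
        exact absurd ha' (by simp)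
      · rw [g3] at ha
        have ha' : a.1 ++ [f₀] = ([] : List S.D) := (Prod.ext_iff.1 ha).1
        exact absurd ha'.symm (nil_ne_concat _ _)
    · rw [h3] at hb1
      rcases hbb : b.1 with _ | ⟨bh, bt⟩
      · exact absurd hbb h1
      · rw [hbb] at hb1
        have hb1' : bh :: (bt ++ [f₀]) = d :: t := by
          rw [← List.cons_append]
          exact hb1
        injection hb1' with e1 e2
        subst e1
        subst e2
        rw [rep_concat] at ha
        have haa : a = S.rep bt (S.lf bh) := phi_inj ha
        refine Or.inr (Or.inl ⟨bh, bt, hbb, haa, ?_⟩)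
        rw [h3] at hadj
        exact hadj
  rcases h with ⟨hch, hadj⟩ | hg | hg
  · rcases phi_cases (f₀ := f₀) a with ⟨g1, g2, g3⟩ | ⟨g1, g2, g3⟩ | ⟨g1, g3⟩ <;>
      rcases phi_cases (f₀ := f₀) b with ⟨h1, h2, h3⟩ | ⟨h1, h2, h3⟩ | ⟨h1, h3⟩ <;>
      rw [g3, h3] at hch hadj
  -- (A,A)
    · exact absurd hadj (S.G.loopless.irrefl _)
  -- (A,B)
    · exact absurd (hch : ([] : List S.D) = [f₀]) (by simp)
  -- (A,C)
    · exact absurd (hch : ([] : List S.D) = b.1 ++ [f₀]) (nil_ne_concat _ _)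
  -- (B,A)
    · exact absurd (hch : [f₀] = ([] : List S.D)) (by simp)
  -- (B,B)
    · exact Or.inl ⟨g1.trans h1.symm, hadj⟩
  -- (B,C)
    · exact absurd (singleton_eq_concat (hch : [f₀] = b.1 ++ [f₀])).1 h1
  -- (C,A)
    · exact absurd (hch : a.1 ++ [f₀] = ([] : List S.D)).symm (nil_ne_concat _ _)
  -- (C,B)
    · exact absurd (singleton_eq_concat (hch : a.1 ++ [f₀] = [f₀]).symm).1 g1
  -- (C,C)
    · exact Or.inl ⟨List.append_cancel_right (hch : a.1 ++ [f₀] = b.1 ++ [f₀]), hadj⟩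
  · exact glue_case _ _ hg
  · exact adj0_symm (glue_case _ _ hg)

lemma phi_base (x : List S.D × V) : S.base (phi f₀ x) = S.lf f₀ := by
  rcases phi_cases (f₀ := f₀) x with ⟨h1, h2, h3⟩ | ⟨h1, h2, h3⟩ | ⟨h1, h3⟩ <;> rw [h3]
  · exact base_nil _
  · rw [base_eq_getLast (by simp)]
    rfl
  · exact base_concat _ _ _

lemma ok_concat {sl : List S.D} (h : S.Ok sl) (hne : sl ≠ [])
    (hmem : S.lf (sl.getLast hne) ∈ S.Bd f₀) : S.Ok (sl ++ [f₀]) := by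
  refine List.isChain_append.2 ⟨h, List.isChain_singleton _, ?_⟩
  intro x hx y hy
  rw [List.getLast?_eq_getLast_of_ne_nil hne, Option.mem_def, Option.some.injEq] at hx
  simp only [List.head?_cons, Option.mem_def, Option.some.injEq] at hy
  subst hx
  subst hy
  exact hmem

lemma ok_dropLast_last {sl : List S.D} (h : S.Ok sl) (hne : sl ≠ [])
    (hne2 : sl.dropLast ≠ []) :
    S.lf (sl.dropLast.getLast hne2) ∈ S.Bd (sl.getLast hne) := by
  have h2 : S.Ok (sl.dropLast ++ [sl.getLast hne]) := by
    rw [List.dropLast_append_getLast hne]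
    exact h
  have h3 := (List.isChain_append.1 h2).2.2
  exact h3 _ (by rw [List.getLast?_eq_getLast_of_ne_nil hne2]; rfl) _ rfl

lemma ok_of_valid {s : List S.D} {v : V} (h : S.Valid (s, v)) : S.Ok s := by
  cases s with
  | nil => exact List.isChain_nil
  | cons d t => exact h.2.2

lemma phi_valid {x : List S.D × V} (hx : S.Valid x) (hb : S.base x ∈ S.Bd f₀) :
    S.Valid (phi f₀ x) := by
  rcases x with ⟨s, v⟩
  rcases phi_cases (f₀ := f₀) ((s, v) : List S.D × V) with
    ⟨h1, h2, h3⟩ | ⟨h1, h2, h3⟩ | ⟨h1, h3⟩ <;> rw [h3]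
  · trivial
  · have h1' : s = [] := h1
    subst h1'
    refine ⟨?_, h2, List.isChain_singleton _⟩
    rw [← base_nil (S := S) v]
    exact hb
  · have h1' : s ≠ [] := h1
    cases s with
    | nil => exact absurd rfl h1'
    | cons d t =>
      rw [List.cons_append]
      refine ⟨hx.1, hx.2.1, ?_⟩
      rw [← List.cons_append]
      refine ok_concat hx.2.2 (by simp) ?_
      rw [← base_eq_getLast (by simp) v]
      exact hb

lemma psi_valid {x : List S.D × V} (hx : S.Valid x) (hb : S.base x = S.lf f₀) :
    S.Valid (psi f₀ x) ∧ S.base (psi f₀ x) ∈ S.Bd f₀ := by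
  rcases x with ⟨s, v⟩
  by_cases h1 : s = []
  · subst h1
    rw [Setup.psi, if_pos rfl]
    refine ⟨trivial, ?_⟩
    rw [base_nil]
    exact rt_mem_Bd f₀
  · rw [Setup.psi, if_neg h1]
    have hg : s.getLast h1 = f₀ := labelEq ((base_eq_getLast h1 v).symm.trans hb)
    by_cases h2 : s.dropLast = []
    · rw [h2]
      refine ⟨trivial, ?_⟩
      rw [base_nil]
      have hx1 : s = [f₀] := by
        conv_lhs => rw [← List.dropLast_append_getLast h1]
        rw [h2, hg, List.nil_append]
      exact (valid_of_chain hx (hx1 : (s, v).1 = f₀ :: [])).1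
    · constructor
      · rcases hdd : s.dropLast with _ | ⟨d, t⟩
        · exact absurd hdd h2
        · have hsd : s = d :: (t ++ [s.getLast h1]) := by
            conv_lhs => rw [← List.dropLast_append_getLast h1]
            rw [hdd, List.cons_append]
          have hval := valid_of_chain hx (hsd : (s, v).1 = _)
          refine ⟨hval.1, hval.2.1, ?_⟩
          rw [← hdd]
          exact (ok_of_valid hx).dropLast
      · rw [base_eq_getLast h2, ← hg]
        exact ok_dropLast_last (ok_of_valid hx) h1 h2

lemma psi_phi (x : List S.D × V) : psi f₀ (phi f₀ x) = x := by
  rcases x with ⟨s, v⟩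
  rcases phi_cases (f₀ := f₀) ((s, v) : List S.D × V) with
    ⟨h1, h2, h3⟩ | ⟨h1, h2, h3⟩ | ⟨h1, h3⟩ <;> rw [h3]
  · have h1' : s = [] := h1
    have h2' : v = S.rt f₀ := h2
    subst h1'
    subst h2'
    rw [Setup.psi, if_pos rfl]
  · have h1' : s = [] := h1
    subst h1'
    rw [Setup.psi, if_neg (by simp), List.dropLast_singleton]
  · rw [Setup.psi, if_neg (by simp), List.dropLast_concat]

lemma phi_psi {x : List S.D × V} (hx : S.Valid x) (hb : S.base x = S.lf f₀) :
    phi f₀ (psi f₀ x) = x := by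
  rcases x with ⟨s, v⟩
  by_cases h1 : s = []
  · subst h1
    rw [Setup.psi, if_pos rfl, Setup.phi, if_pos rfl, if_pos rfl]
    have hb' : v = S.lf f₀ := by
      rw [← base_nil (S := S) v]
      exact hb
    rw [hb']
  · rw [Setup.psi, if_neg h1]
    have hg : s.getLast h1 = f₀ := labelEq ((base_eq_getLast h1 v).symm.trans hb)
    by_cases h2 : s.dropLast = []
    · have hx1 : s = [f₀] := by
        conv_lhs => rw [← List.dropLast_append_getLast h1]
        rw [h2, hg, List.nil_append]
      subst hx1
      have hval := valid_of_chain hx (rfl : ((f₀ :: [], v) : List S.D × V).1 = f₀ :: [])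
      rw [List.dropLast_singleton, Setup.phi, if_pos rfl, if_neg hval.2.1]
    · rw [Setup.phi, if_neg h2]
      have hs : s = s.dropLast ++ [f₀] := by
        conv_lhs => rw [← List.dropLast_append_getLast h1]
        rw [hg]
      conv_rhs => rw [hs]

end Phi

variable (S)

/-- The vertices of the closure branch over the promise edge of `f₀`. -/
def SA (f₀ : S.D) : Set S.W := {w | S.base w.val ∈ S.Bd f₀}

/-- The vertices of the closure branch hanging at the promise leaf of `f₀`. -/
def SB (f₀ : S.D) : Set S.W := {w | S.base w.val = S.lf f₀}

/-- The branch isomorphism of the closure. -/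
noncomputable def branchIso (f₀ : S.D) : (S.H).induce (S.SA f₀) ≃g (S.H).induce (S.SB f₀) where
  toFun z := ⟨⟨phi f₀ z.val.val, phi_valid z.val.prop z.prop⟩, phi_base z.val.val⟩
  invFun z := ⟨⟨psi f₀ z.val.val, (psi_valid z.val.prop z.prop).1⟩,
    (psi_valid z.val.prop z.prop).2⟩
  left_inv z := by
    apply Subtype.ext
    apply Subtype.ext
    exact psi_phi z.val.val
  right_inv z := by
    apply Subtype.ext
    apply Subtype.ext
    exact phi_psi z.val.prop z.prop
  map_rel_iff' := by
    intro x y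
    exact ⟨fun hh => adj0_phi_rev hh, fun hh => adj0_phi hh⟩

variable {S}

lemma eq_emb_of_base {z : V} (hnf : ∀ f : S.D, S.lf f ≠ z) {w : S.W}
    (h : S.base w.val = z) : w = S.emb z := by
  rcases w with ⟨⟨s, v⟩, hval⟩
  cases s with
  | nil =>
    refine wext (pext rfl ?_)
    rw [← base_nil (S := S) v]
    exact h
  | cons f t =>
    rw [base_eq_getLast (by simp)] at h
    exact absurd h (hnf _)

variable (S)

/-- Isomorphism between two single-vertex induced subgraphs. -/
noncomputable def singIso (a b : S.W) :
    (S.H).induce ({a} : Set S.W) ≃g (S.H).induce ({b} : Set S.W) where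
  toFun _ := ⟨b, rfl⟩
  invFun _ := ⟨a, rfl⟩
  left_inv z := Subtype.ext z.prop.symm
  right_inv z := Subtype.ext z.prop.symm
  map_rel_iff' := by
    intro x y
    constructor
    · intro hh
      exact absurd hh ((S.H).loopless.irrefl b)
    · intro hh
      exfalso
      have hxy : x = y := Subtype.ext (x.prop.trans y.prop.symm)
      rw [hxy] at hh
      exact (S.H).loopless.irrefl y.val hh

variable {S}

lemma branchRootedIso_main {i : I} {ℓ u : V} (hℓ : ℓ ∈ S.L i)
    (hu : S.G.neighborSet ℓ = {u}) :
    BranchRootedIso (S.H) (S.emb (S.p i).1) (S.emb (S.p i).2) (S.H) (S.emb u) (S.emb ℓ) := by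
  by_cases hpl : IsPlaceholder S.G S.p S.L i
  · have hnf_rt : ∀ f : S.D, S.lf f ≠ (S.p i).2 := by
      intro f hf
      have hi : f.val.1 = i := by
        by_contra hne
        exact Set.not_disjoint_iff.2 ⟨S.lf f, lf_mem f, hf ▸ hpl.1⟩ (S.hdisj hne)
      exact f.property.2 (by rw [hi]; exact hpl)
    have hnf_l : ∀ f : S.D, S.lf f ≠ ℓ := by
      intro f hf
      have hi : f.val.1 = i := by
        by_contra hne
        exact Set.not_disjoint_iff.2 ⟨S.lf f, lf_mem f, hf ▸ hℓ⟩ (S.hdisj hne)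
      exact f.property.2 (by rw [hi]; exact hpl)
    have hA : branchSet (S.H) (S.emb (S.p i).1) (S.emb (S.p i).2) =
        ({S.emb (S.p i).2} : Set S.W) := by
      rw [branch_H]
      ext w
      simp only [Set.mem_setOf_eq, Set.mem_singleton_iff]
      rw [hpl.2]
      constructor
      · intro hw
        exact eq_emb_of_base hnf_rt hw
      · rintro rfl
        rw [emb_val, base_nil]
        rfl
    have hB : branchSet (S.H) (S.emb u) (S.emb ℓ) = ({S.emb ℓ} : Set S.W) := by
      rw [branch_H]
      ext w
      simp only [Set.mem_setOf_eq, Set.mem_singleton_iff]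
      rw [branch_of_nbr_singleton hu]
      constructor
      · intro hw
        exact eq_emb_of_base hnf_l hw
      · rintro rfl
        rw [emb_val, base_nil]
        rfl
    unfold BranchRootedIso
    rw [hA, hB]
    exact ⟨singIso S _ _, fun h => rfl⟩
  · have hA : branchSet (S.H) (S.emb (S.p i).1) (S.emb (S.p i).2) =
        S.SA ⟨(i, ℓ), hℓ, hpl⟩ := by
      rw [branch_H]
      rfl
    have hB : branchSet (S.H) (S.emb u) (S.emb ℓ) = S.SB ⟨(i, ℓ), hℓ, hpl⟩ := by
      rw [branch_H]
      ext w
      simp only [Set.mem_setOf_eq]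
      rw [branch_of_nbr_singleton hu]
      exact Iff.rfl
    unfold BranchRootedIso
    rw [hA, hB]
    refine ⟨S.branchIso ⟨(i, ℓ), hℓ, hpl⟩, ?_⟩
    intro h
    apply wext
    show phi (f₀ := ⟨(i, ℓ), hℓ, hpl⟩) (([], (S.p i).2) : List S.D × V) = (S.emb ℓ).val
    unfold Setup.phi
    rw [
      if_pos (show ((([] : List S.D), (S.p i).2) : List S.D × V).1 = [] from rfl),
      if_pos (show ((([] : List S.D), (S.p i).2) : List S.D × V).2 =
        S.rt ⟨(i, ℓ), hℓ, hpl⟩ from rfl), emb_val]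
    rfl

/-! ### Degrees -/

/-- Ascending chains over a fixed vertex: the (deterministic) tower of copies whose
roots collapse onto the vertex `(c, v)`. -/
inductive Asc (S : Setup V I) (c : List S.D) (v : V) : List S.D × V → Prop
  | base : Asc S c v (c, v)
  | step {s : List S.D} {y : V} (f : S.D) : Asc S c v (s, y) → S.lf f = y →
      Asc S c v (f :: s, S.rt f)

lemma asc_len {c : List S.D} {v : V} {x : List S.D × V} (h : Asc S c v x) :
    c.length ≤ x.1.length := by
  induction h with
  | base => exact le_refl _
  | step f h e ih => exact le_trans ih (Nat.le_succ _)

lemma rep_stop {c : List S.D} {v : V} (hval : S.Valid (c, v)) : S.rep c v = (c, v) := by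
  cases c with
  | nil => exact rep_nil v
  | cons d t => rw [rep_cons, if_neg hval.2.1]

lemma rep_asc : ∀ (s : List S.D) (y : V) {c : List S.D} {v : V},
    S.rep s y = (c, v) → Asc S c v (s, y) := by
  intro s
  induction s with
  | nil =>
    intro y c v h
    rw [rep_nil] at h
    injection h with h1 h2
    subst h1
    subst h2
    exact Asc.base
  | cons e t ih =>
    intro y c v h
    rw [rep_cons] at h
    split at h
    · next hy =>
      subst hy
      exact Asc.step e (ih _ h) rfl
    · injection h with h1 h2
      subst h1
      subst h2
      exact Asc.base

lemma asc_det {c : List S.D} {v : V} : ∀ {x y : List S.D × V},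
    Asc S c v x → Asc S c v y → x.1.length = y.1.length → x = y := by
  intro x y h1
  induction h1 generalizing y with
  | base =>
    intro h2 hlen
    cases h2 with
    | base => rfl
    | step f h e =>
      exfalso
      have := asc_len h
      dsimp only at this hlen
      simp only [List.length_cons] at hlen
      omega
  | @step s z f h e ih =>
    intro h2 hlen
    cases h2 with
    | base =>
      exfalso
      have := asc_len h
      dsimp only at this hlen
      simp only [List.length_cons] at hlen
      omega
    | @step s' z' f' h' e' =>
      dsimp only at hlen
      simp only [List.length_cons] at hlen
      have hpair : (s, z) = (s', z') := ih h' (by dsimp only; omega)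
      injection hpair with hs hz
      subst hs
      have hf : f = f' := labelEq (by rw [e, e', hz])
      subst hf
      rfl

lemma asc_mid {c : List S.D} {v : V} : ∀ {x : List S.D × V}, Asc S c v x →
    ∀ n : ℕ, c.length ≤ n → n < x.1.length →
    ∃ (t : List S.D) (z : V) (f : S.D), Asc S c v (t, z) ∧ S.lf f = z ∧ t.length = n := by
  intro x h
  induction h with
  | base =>
    intro n h1 h2
    dsimp only at h2
    omega
  | @step s z f h e ih =>
    intro n h1 h2
    dsimp only at h2
    simp only [List.length_cons] at h2
    by_cases hn : n = s.length
    · exact ⟨s, z, f, h, e, hn.symm⟩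
    · exact ih n h1 (by dsimp only; omega)

lemma asc_first {c : List S.D} {v : V} : ∀ {x : List S.D × V}, Asc S c v x →
    x = (c, v) ∨ ∃ f : S.D, S.lf f = v := by
  intro x h
  induction h with
  | base => exact Or.inl rfl
  | @step s z f h e ih =>
    rcases ih with h' | h'
    · right
      injection h' with h1 h2
      exact ⟨f, by rw [e, h2]⟩
    · exact Or.inr h'

lemma asc_no_deeper {c : List S.D} {v : V} {e₁ : S.D} {t₁ : List S.D}
    (A₁ : Asc S c v (t₁, S.lf e₁)) {x₁ : V} (hx₁ : x₁ ∈ S.Bd e₁) (hxr : x₁ ≠ S.rt e₁)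
    {e₂ : S.D} {t₂ : List S.D} (A₂ : Asc S c v (t₂, S.lf e₂)) :
    ¬ (t₁.length < t₂.length) := by
  intro hlt
  have A₁' : Asc S c v (e₁ :: t₁, S.rt e₁) := Asc.step e₁ A₁ rfl
  by_cases heq : t₂.length = t₁.length + 1
  · have := asc_det A₂ A₁' (by dsimp only; simp only [List.length_cons]; omega)
    injection this with h1 h2
    exact lf_ne_rt hx₁ hxr h2
  · obtain ⟨t, z, f, hA, hf, hlen⟩ := asc_mid A₂ (t₁.length + 1)
      (le_trans (asc_len A₁) (Nat.le_succ _))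
      (by dsimp only; omega)
    have := asc_det hA A₁' (by dsimp only; simp only [List.length_cons]; omega)
    injection this with h1 h2
    subst h2
    exact lf_ne_rt hx₁ hxr hf

lemma glue_asc {c : List S.D} {v : V} (hval : S.Valid (c, v)) {z : S.W}
    (h : S.Glue (c, v) z.val) :
    ∃ (e : S.D) (t : List S.D), z.val.1 = e :: t ∧ Asc S c v (t, S.lf e) ∧
      z.val.2 ∈ S.Bd e ∧ z.val.2 ≠ S.rt e ∧ S.G.Adj (S.rt e) z.val.2 := by
  obtain ⟨e, t, hc, hr, hadj⟩ := h
  have hv := valid_of_chain z.property hc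
  exact ⟨e, t, hc, rep_asc t _ hr.symm, hv.1, hv.2.1, hadj⟩

/-- All gluing children of a vertex live in the same copy. -/
lemma children_chain_eq {c : List S.D} {v : V} (hval : S.Valid (c, v)) {z₁ z₂ : S.W}
    (h₁ : S.Glue (c, v) z₁.val) (h₂ : S.Glue (c, v) z₂.val) : z₁.val.1 = z₂.val.1 := by
  obtain ⟨e₁, t₁, hc₁, A₁, hb₁, hr₁, -⟩ := glue_asc hval h₁
  obtain ⟨e₂, t₂, hc₂, A₂, hb₂, hr₂, -⟩ := glue_asc hval h₂
  have hle₁ := asc_no_deeper A₁ hb₁ hr₁ A₂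
  have hle₂ := asc_no_deeper A₂ hb₂ hr₂ A₁
  have := asc_det A₁ A₂ (by dsimp only; omega)
  injection this with h1 h2
  have he : e₁ = e₂ := labelEq h2
  rw [hc₁, hc₂, h1, he]

lemma sup_deg_le (w : S.W) : ∃ v' : V,
    Nonempty (((S.H).neighborSet w) ↪ (S.G.neighborSet v')) := by
  classical
  obtain ⟨⟨c, v⟩, hval⟩ := w
  by_cases hch : ∃ z : S.W, S.Glue (c, v) z.val
  · -- there are gluing children
    obtain ⟨z₀, hz₀⟩ := hch
    obtain ⟨e₀, t₀, hc₀, A₀, hb₀, hr₀, hadj₀⟩ := glue_asc hval hz₀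
    have hfv : ∃ f : S.D, S.lf f = v := by
      rcases asc_first A₀ with h' | h'
      · injection h' with h1 h2
        exact ⟨e₀, h2⟩
      · exact h'
    obtain ⟨fv, hfv⟩ := hfv
    have hleafv : IsLeaf S.G v := hfv ▸ lf_leaf fv
    refine ⟨S.rt e₀, ⟨⟨fun zz => if h : S.Glue (c, v) zz.val.val then ⟨zz.val.val.2, ?_⟩
      else ⟨S.src e₀, (adj_src_rt e₀).symm⟩, ?_⟩⟩⟩
    · -- membership for children
      obtain ⟨e, t, hc', A', hb', hr', hadj'⟩ := glue_asc hval h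
      have hchain : zz.val.val.1 = z₀.val.1 := children_chain_eq hval h hz₀
      rw [hc₀] at hchain
      rw [hc'] at hchain
      injection hchain with he ht
      rw [← he]
      exact hadj'
    · -- injectivity
      intro zz₁ zz₂ heq
      dsimp only at heq
      by_cases h1 : S.Glue (c, v) zz₁.val.val <;> by_cases h2 : S.Glue (c, v) zz₂.val.val
      · rw [dif_pos h1, dif_pos h2] at heq
        have hv2 : zz₁.val.val.2 = zz₂.val.val.2 := congrArg Subtype.val heq
        have hch' : zz₁.val.val.1 = zz₂.val.val.1 := children_chain_eq hval h1 h2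
        exact Subtype.ext (wext (pext hch' hv2))
      · exfalso
        rw [dif_pos h1, dif_neg h2] at heq
        have hv2 : zz₁.val.val.2 = S.src e₀ := congrArg Subtype.val heq
        obtain ⟨e, t, hc', A', hb', hr', hadj'⟩ := glue_asc hval h1
        have hchain : zz₁.val.val.1 = z₀.val.1 := children_chain_eq hval h1 hz₀
        rw [hc₀] at hchain
        rw [hc'] at hchain
        injection hchain with he ht
        rw [he, hv2] at hb'
        exact src_not_mem_Bd e₀ hb'
      · exfalso
        rw [dif_neg h1, dif_pos h2] at heq
        have hv2 : zz₂.val.val.2 = S.src e₀ := (congrArg Subtype.val heq).symm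
        obtain ⟨e, t, hc', A', hb', hr', hadj'⟩ := glue_asc hval h2
        have hchain : zz₂.val.val.1 = z₀.val.1 := children_chain_eq hval h2 hz₀
        rw [hc₀] at hchain
        rw [hc'] at hchain
        injection hchain with he ht
        rw [he, hv2] at hb'
        exact src_not_mem_Bd e₀ hb'
      · -- both non-children: the unique neighbour of the leaf `v`
        rw [dif_neg h1, dif_neg h2] at heq
        obtain ⟨u₀, hu₀⟩ := Set.ncard_eq_one.1 hleafv
        have key : ∀ zz : (S.H).neighborSet ⟨(c, v), hval⟩, ¬ S.Glue (c, v) zz.val.val →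
            (zz.val.val.1 = c ∧ zz.val.val.2 = u₀) ∨
            (∃ d t, c = d :: t ∧ zz.val.val = S.rep t (S.lf d) ∧ u₀ = S.rt d) := by
          intro zz hng
          have hadj : S.Adj0 (c, v) zz.val.val := zz.prop
          rcases hadj with ⟨hch', hadjv⟩ | hg | hg
          · left
            have hmem : zz.val.val.2 ∈ S.G.neighborSet v := hadjv
            rw [hu₀, Set.mem_singleton_iff] at hmem
            exact ⟨hch'.symm, hmem⟩
          · exact absurd hg hng
          · right
            obtain ⟨d, t, hcc, hzz, hadj'⟩ := hg
            refine ⟨d, t, hcc, hzz, ?_⟩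
            have hmem : S.rt d ∈ S.G.neighborSet v := hadj'.symm
            rw [hu₀, Set.mem_singleton_iff] at hmem
            exact hmem.symm
        rcases key zz₁ h1 with ⟨k1, k2⟩ | ⟨d, t, hct, hzz, hrt⟩ <;>
          rcases key zz₂ h2 with ⟨m1, m2⟩ | ⟨d', t', hct', hzz', hrt'⟩
        · exact Subtype.ext (wext (pext (k1.trans m1.symm) (k2.trans m2.symm)))
        · exact absurd (hrt' ▸ k2 : zz₁.val.val.2 = S.rt d')
            (valid_of_chain zz₁.val.property (k1.trans hct')).2.1
        · exact absurd (hrt ▸ m2 : zz₂.val.val.2 = S.rt d)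
            (valid_of_chain zz₂.val.property (m1.trans hct)).2.1
        · have hdt : d = d' ∧ t = t' := by
            rw [hct] at hct'
            injection hct' with a b
            exact ⟨a, b⟩
          obtain ⟨rfl, rfl⟩ := hdt
          exact Subtype.ext (wext (hzz.trans hzz'.symm))
  · -- no gluing children
    have fact : ∀ zz : (S.H).neighborSet ⟨(c, v), hval⟩,
        (zz.val.val.1 = c ∧ S.G.Adj v zz.val.val.2) ∨
        (∃ d t, c = d :: t ∧ zz.val.val = S.rep t (S.lf d) ∧ S.G.Adj (S.rt d) v) := by
      intro zz
      have hadj : S.Adj0 (c, v) zz.val.val := zz.prop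
      rcases hadj with ⟨hch', hadjv⟩ | hg | hg
      · exact Or.inl ⟨hch'.symm, hadjv⟩
      · exact absurd ⟨zz.val, hg⟩ hch
      · obtain ⟨d, t, hcc, hzz, hadj'⟩ := hg
        exact Or.inr ⟨d, t, hcc, hzz, hadj'⟩
    cases c with
    | nil =>
      refine ⟨v, ⟨⟨fun zz => ⟨zz.val.val.2, ?_⟩, ?_⟩⟩⟩
      · rcases fact zz with ⟨-, h'⟩ | ⟨d, t, hct, -⟩
        · exact h'
        · exact absurd hct (by simp)
      · intro zz₁ zz₂ heq
        have hv2 : zz₁.val.val.2 = zz₂.val.val.2 := congrArg Subtype.val heq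
        have k1 : zz₁.val.val.1 = ([] : List S.D) := by
          rcases fact zz₁ with ⟨h', -⟩ | ⟨d, t, hct, -⟩
          · exact h'
          · exact absurd hct (by simp)
        have m1 : zz₂.val.val.1 = ([] : List S.D) := by
          rcases fact zz₂ with ⟨h', -⟩ | ⟨d, t, hct, -⟩
          · exact h'
          · exact absurd hct (by simp)
        exact Subtype.ext (wext (pext (k1.trans m1.symm) hv2))
    | cons d t =>
      refine ⟨v, ⟨⟨fun zz => if h : zz.val.val.1 = d :: t then ⟨zz.val.val.2, ?_⟩
        else ⟨S.rt d, ?_⟩, ?_⟩⟩⟩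
      · rcases fact zz with ⟨-, h'⟩ | ⟨d', t', hct, hzz, -⟩
        · exact h'
        · exfalso
          have hlen : zz.val.val.1.length ≤ t'.length := by
            rw [hzz]
            exact rep_len t' _
          rw [h] at hlen
          injection hct with a b
          subst a
          subst b
          simp at hlen
      · rcases fact zz with ⟨h', -⟩ | ⟨d', t', hct, hzz, hadj'⟩
        · exact absurd h' h
        · injection hct with a b
          subst a
          exact hadj'.symm
      · intro zz₁ zz₂ heq
        dsimp only at heq
        by_cases h1 : zz₁.val.val.1 = d :: t <;> by_cases h2 : zz₂.val.val.1 = d :: t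
        · rw [dif_pos h1, dif_pos h2] at heq
          have hv2 : zz₁.val.val.2 = zz₂.val.val.2 := congrArg Subtype.val heq
          exact Subtype.ext (wext (pext (h1.trans h2.symm) hv2))
        · exfalso
          rw [dif_pos h1, dif_neg h2] at heq
          have hv2 : zz₁.val.val.2 = S.rt d := congrArg Subtype.val heq
          exact (valid_of_chain zz₁.val.property h1).2.1 hv2
        · exfalso
          rw [dif_neg h1, dif_pos h2] at heq
          have hv2 : zz₂.val.val.2 = S.rt d := (congrArg Subtype.val heq).symm
          exact (valid_of_chain zz₂.val.property h2).2.1 hv2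
        · have e₁ : zz₁.val.val = S.rep t (S.lf d) := by
            rcases fact zz₁ with ⟨h', -⟩ | ⟨d', t', hct, hzz, -⟩
            · exact absurd h' h1
            · injection hct with a b
              subst a
              subst b
              exact hzz
          have e₂ : zz₂.val.val = S.rep t (S.lf d) := by
            rcases fact zz₂ with ⟨h', -⟩ | ⟨d', t', hct, hzz, -⟩
            · exact absurd h' h2
            · injection hct with a b
              subst a
              subst b
              exact hzz
          exact Subtype.ext (wext (e₁.trans e₂.symm))

lemma mk_nbr_le (v : V) :
    Cardinal.mk (S.G.neighborSet v) ≤ Cardinal.mk ((S.H).neighborSet (S.emb v)) := by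
  apply Cardinal.mk_le_of_injective (f := fun u : S.G.neighborSet v =>
    (⟨S.emb u.val, Or.inl ⟨rfl, u.prop⟩⟩ : (S.H).neighborSet (S.emb v)))
  intro a b h
  have h1 : S.emb a.val = S.emb b.val := congrArg Subtype.val h
  exact Subtype.ext (S.emb.injective h1)

lemma sup_degrees : (⨆ v : V, Cardinal.mk (S.G.neighborSet v)) =
    ⨆ w : S.W, Cardinal.mk ((S.H).neighborSet w) := by
  apply _root_.le_antisymm
  · refine ciSup_le' ?_
    intro v
    exact (mk_nbr_le v).trans (le_ciSup (Cardinal.bddAbove_range _) (S.emb v))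
  · refine ciSup_le' ?_
    intro w
    obtain ⟨v', ⟨F⟩⟩ := sup_deg_le w
    exact (Cardinal.mk_le_of_injective F.injective).trans
      (le_ciSup (Cardinal.bddAbove_range _) v')

/-- The master lemma: existence of the closure of a promise structure. -/
lemma main (S : Setup V I) :
    ∃ (W : Type) (H : SimpleGraph W) (ι : V ↪ W),
      H.IsAcyclic ∧
      IsLeafExtension S.G H ι (⋃ i ∈ {i : I | ¬ IsPlaceholder S.G S.p S.L i}, S.L i) ∧
      (∀ i : I, ∀ ℓ ∈ S.L i, ∀ u : V, S.G.neighborSet ℓ = {u} →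
        BranchRootedIso H (ι (S.p i).1) (ι (S.p i).2) H (ι u) (ι ℓ)) ∧
      (⨆ v : V, Cardinal.mk ↥(S.G.neighborSet v)) =
        (⨆ w : W, Cardinal.mk ↥(H.neighborSet w)) := by
  refine ⟨S.W, S.H, S.emb, H_isAcyclic, ⟨?_, ?_, ?_, ?_⟩, ?_, sup_degrees⟩
  · intro a b
    exact adj_emb_iff a b
  · intro w
    exact ⟨S.base w.val, reach_base w⟩
  · intro v v' h
    exact reach_emb h
  · intro w hw g q _
    have h2 : w.val.1 ≠ [] := fun h => hw (mem_range_emb.2 h)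
    obtain ⟨d, hd⟩ := walk_meets q rfl h2
    refine ⟨S.lf d, ?_, hd⟩
    simp only [Set.mem_iUnion]
    exact ⟨d.val.1, d.property.2, lf_mem d⟩
  · intro i ℓ hℓ u hu
    exact branchRootedIso_main hℓ hu

end Setup

end PromiseClosure

/-- Closure of a forest with respect to a promise structure: given a promise structure
`(G, P⃗, 𝓛)` on a forest `G`, there is a forest `cl(G) ⊇ G` (with `G` induced) which is
an `𝓛_q`-extension of `G`, in which for every promise edge `p⃗ᵢ` and every promise leaf
`ℓ ∈ Lᵢ` the rooted trees `cl(G)(p⃗ᵢ)` and `cl(G)(q⃗_ℓ)` are isomorphic as rooted trees,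
and which has the same maximum degree as `G`. -/
theorem exists_promise_closure {V I : Type} (G : SimpleGraph V) (hG : G.IsAcyclic)
    (p : I → V × V) (hp : ∀ i, G.Adj (p i).1 (p i).2)
    (L : I → Set V) (hleaf : ∀ i, ∀ ℓ ∈ L i, IsLeaf G ℓ)
    (hdisj : Pairwise fun i j => Disjoint (L i) (L j)) :
    ∃ (W : Type) (H : SimpleGraph W) (ι : V ↪ W),
      H.IsAcyclic ∧
      IsLeafExtension G H ι (⋃ i ∈ {i : I | ¬ IsPlaceholder G p L i}, L i) ∧
      (∀ i : I, ∀ ℓ ∈ L i, ∀ u : V, G.neighborSet ℓ = {u} →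
        BranchRootedIso H (ι (p i).1) (ι (p i).2) H (ι u) (ι ℓ)) ∧
      (⨆ v : V, Cardinal.mk ↥(G.neighborSet v)) =
        (⨆ w : W, Cardinal.mk ↥(H.neighborSet w)) :=
  PromiseClosure.Setup.main ⟨G, hG, p, hp, L, hleaf, hdisj⟩
end

section
/- Let G be the tree in which every vertex has countably infinite degree. Then for every vertex v of G, the induced subgraph G − v is isomorphic to the disjoint union of countably infinitely many copies of G; likewise, for every vertex w of the graph H = G ⊔ G (the disjoint union of two copies of G), the induced subgraph H − w is isomorphic to the disjoint union of countably infinitely many copies of G. -/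
/-- The disjoint union of countably infinitely many copies of `G`, one for each
natural number. -/
def countableCopies {V : Type} (G : SimpleGraph V) : SimpleGraph (ℕ × V) where
  Adj a b := a.1 = b.1 ∧ G.Adj a.2 b.2
  symm := ⟨fun a b h => ⟨h.1.symm, h.2.symm⟩⟩
  loopless := ⟨fun a h => G.loopless.irrefl a.2 h.2⟩

open SimpleGraph




/-- The canonical tree on `List ℕ`: each list is adjacent to the lists extending it
by one element. -/
def canonT : SimpleGraph (List ℕ) :=
  SimpleGraph.fromRel (fun a b => ∃ n, b = n :: a)

lemma canonT_adj {a b : List ℕ} :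
    canonT.Adj a b ↔ (∃ n, b = n :: a) ∨ (∃ n, a = n :: b) := by
  constructor
  · rintro ⟨-, h⟩; exact h
  · intro h
    refine ⟨?_, h⟩
    rintro rfl
    rcases h with ⟨n, h⟩ | ⟨n, h⟩ <;>
      exact absurd (congrArg List.length h) (by simp)

section TreeMetric

variable {V : Type} [DecidableEq V] {G : SimpleGraph V}

/-- In a connected graph there is a shortest path between any two vertices. -/
lemma exists_shortest_path (hc : G.Connected) (u v : V) :
    ∃ p : G.Walk u v, p.IsPath ∧ p.length = G.dist u v := by
  obtain ⟨w, hw⟩ := hc.exists_walk_length_eq_dist u v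
  refine ⟨w.bypass, w.bypass_isPath, le_antisymm ?_ (G.dist_le _)⟩
  calc w.bypass.length ≤ w.length := w.length_bypass_le
    _ = G.dist u v := hw

/-- Any vertex on a shortest walk splits the distance. -/
lemma dist_eq_of_mem_shortest (hc : G.Connected) {u v y : V} (p : G.Walk u v)
    (hp : p.length = G.dist u v) (hy : y ∈ p.support) :
    G.dist u y = (p.takeUntil y hy).length ∧ G.dist y v = (p.dropUntil y hy).length := by
  have hsum : (p.takeUntil y hy).length + (p.dropUntil y hy).length = p.length := by
    have := congrArg SimpleGraph.Walk.length (p.take_spec hy)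
    rwa [SimpleGraph.Walk.length_append] at this
  have h1 : G.dist u y ≤ (p.takeUntil y hy).length := G.dist_le _
  have h2 : G.dist y v ≤ (p.dropUntil y hy).length := G.dist_le _
  have h3 : G.dist u v ≤ G.dist u y + G.dist y v := hc.dist_triangle
  omega

lemma IsPath.concat' {u v w : V} {p : G.Walk u v} (hp : p.IsPath) (h : G.Adj v w)
    (hw : w ∉ p.support) : (p.concat h).IsPath := by
  rw [← SimpleGraph.Walk.isPath_reverse_iff, SimpleGraph.Walk.reverse_concat]
  exact (hp.reverse).cons (by simpa using hw)

/-- In a tree, adjacent vertices have different distances from any vertex. -/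
lemma dist_ne_of_adj (hT : G.IsTree) (r : V) {u x : V} (h : G.Adj u x) :
    G.dist r u ≠ G.dist r x := by
  have hc := hT.isConnected
  intro heq
  obtain ⟨P, hP, hPl⟩ := exists_shortest_path hc r u
  obtain ⟨Q, hQ, hQl⟩ := exists_shortest_path hc r x
  have hx : x ∉ P.support := by
    intro hmem
    obtain ⟨hd1, hd2⟩ := dist_eq_of_mem_shortest hc P hPl hmem
    have hlen : (P.takeUntil x hmem).length + (P.dropUntil x hmem).length = P.length := by
      have := congrArg SimpleGraph.Walk.length (P.take_spec hmem)
      rwa [SimpleGraph.Walk.length_append] at this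
    have : G.dist x u = 0 := by
      rw [← heq] at hd1
      omega
    have hxu : x = u := ((h.symm.reachable).dist_eq_zero_iff).mp this
    exact h.ne' hxu
  have hPP : (P.concat h).IsPath := IsPath.concat' hP h hx
  obtain ⟨p₀, -, hu⟩ := hT.existsUnique_path r x
  have e1 := hu _ hPP
  have e2 := hu _ hQ
  have := congrArg SimpleGraph.Walk.length (e1.trans e2.symm)
  rw [SimpleGraph.Walk.length_concat] at this
  omega

/-- In a tree, the neighbor on the `r`-side of a vertex is unique. -/
lemma parent_unique (hT : G.IsTree) (r : V) {x u₁ u₂ : V}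
    (h₁ : G.Adj x u₁) (h₂ : G.Adj x u₂)
    (hd₁ : G.dist r u₁ + 1 = G.dist r x) (hd₂ : G.dist r u₂ + 1 = G.dist r x) :
    u₁ = u₂ := by
  have hc := hT.isConnected
  obtain ⟨P₁, hP₁, hl₁⟩ := exists_shortest_path hc r u₁
  obtain ⟨P₂, hP₂, hl₂⟩ := exists_shortest_path hc r u₂
  have hx₁ : x ∉ P₁.support := by
    intro hmem
    have := (dist_eq_of_mem_shortest hc P₁ hl₁ hmem).1
    have hle := SimpleGraph.Walk.length_takeUntil_le P₁ hmem
    omega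
  have hx₂ : x ∉ P₂.support := by
    intro hmem
    have := (dist_eq_of_mem_shortest hc P₂ hl₂ hmem).1
    have hle := SimpleGraph.Walk.length_takeUntil_le P₂ hmem
    omega
  have hW₁ : (P₁.concat h₁.symm).IsPath := IsPath.concat' hP₁ h₁.symm hx₁
  have hW₂ : (P₂.concat h₂.symm).IsPath := IsPath.concat' hP₂ h₂.symm hx₂
  obtain ⟨p₀, -, hu⟩ := hT.existsUnique_path r x
  have e := (hu _ hW₁).trans (hu _ hW₂).symm
  obtain ⟨hv, -⟩ := SimpleGraph.Walk.concat_inj e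
  exact hv

end TreeMetric

lemma countableCopies_adj {V : Type} {G : SimpleGraph V} {a b : ℕ × V} :
    (countableCopies G).Adj a b ↔ a.1 = b.1 ∧ G.Adj a.2 b.2 := Iff.rfl



section Build

variable {V : Type} (G : SimpleGraph V)

/-- The neighbors of `v` other than `p`. -/
def childSet (v p : V) : Set V := G.neighborSet v \ {p}

variable {G}

lemma childEquiv_nonempty (hdeg : ∀ v : V, Cardinal.mk ↥(G.neighborSet v) = Cardinal.aleph0)
    (v p : V) : Nonempty (ℕ ≃ ↥(childSet G v p)) := by
  have h1 : (G.neighborSet v).Infinite := by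
    rw [← Set.infinite_coe_iff, Cardinal.infinite_iff, hdeg v]
  have h2 : (childSet G v p).Infinite := h1.diff (Set.finite_singleton p)
  have h3 : (childSet G v p).Countable := by
    have hc : (G.neighborSet v).Countable := by
      rw [← Set.countable_coe_iff, ← Cardinal.mk_le_aleph0_iff, hdeg v]
    exact hc.mono Set.diff_subset
  haveI : Countable ↥(childSet G v p) := Set.countable_coe_iff.mpr h3
  haveI : Infinite ↥(childSet G v p) := Set.infinite_coe_iff.mpr h2
  exact Cardinal.eq.mp (by rw [Cardinal.mk_eq_aleph0 ↥(childSet G v p)]; exact Cardinal.mk_nat)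

/-- Build the vertex (first component) and its parent (second component) assigned to a
list, given a choice of enumeration of children and a root. -/
noncomputable def build (e : ∀ v p : V, ℕ ≃ ↥(childSet G v p)) (r : V) :
    List ℕ → V × V
  | [] => (r, r)
  | n :: l => (((e (build e r l).1 (build e r l).2 n : ↥(childSet G (build e r l).1 (build e r l).2)) : V), (build e r l).1)

end Build

lemma exists_rooted_iso {V : Type} {G : SimpleGraph V} (hT : G.IsTree)
    (hdeg : ∀ v : V, Cardinal.mk ↥(G.neighborSet v) = Cardinal.aleph0) (r : V) :
    ∃ f : canonT ≃g G, f [] = r := by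
  classical
  have hc := hT.isConnected
  let e : ∀ v p : V, ℕ ≃ ↥(childSet G v p) := fun v p =>
    Classical.choice (childEquiv_nonempty hdeg v p)
  let g : List ℕ → V := fun l => (build e r l).1
  let par : List ℕ → V := fun l => (build e r l).2
  have hg_nil : g [] = r := rfl
  have hpar_nil : par [] = r := rfl
  have hpar_cons : ∀ (n : ℕ) (l : List ℕ), par (n :: l) = g l := fun n l => rfl
  have hgc : ∀ (n : ℕ) (l : List ℕ), g (n :: l) = ((e (g l) (par l) n : V)) :=
    fun n l => rfl
  have hmem : ∀ (n : ℕ) (l : List ℕ), g (n :: l) ∈ childSet G (g l) (par l) := by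
    intro n l
    rw [hgc]
    exact (e (g l) (par l) n).2
  have hadj : ∀ (n : ℕ) (l : List ℕ), G.Adj (g l) (g (n :: l)) := fun n l => (hmem n l).1
  have hne : ∀ (n : ℕ) (l : List ℕ), g (n :: l) ≠ par l := fun n l => (hmem n l).2
  -- the key induction: distances and parents
  have hGood : ∀ l : List ℕ, G.dist r (g l) = l.length ∧
      ∀ u, G.Adj (g l) u → G.dist r u + 1 = G.dist r (g l) → u = par l := by
    intro l
    induction l with
    | nil =>
      refine ⟨by rw [hg_nil]; simp, ?_⟩
      intro u _ hdist
      rw [hg_nil, SimpleGraph.dist_self] at hdist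
      exact absurd hdist (by omega)
    | cons n l ih =>
      obtain ⟨ih1, ih2⟩ := ih
      have hxy := hadj n l
      have t1 : G.dist r (g (n :: l)) ≤ G.dist r (g l) + G.dist (g l) (g (n :: l)) :=
        hc.dist_triangle
      have t2 : G.dist (g l) (g (n :: l)) ≤ 1 := by
        simpa using G.dist_le hxy.toWalk
      have t3 : G.dist r (g l) ≤ G.dist r (g (n :: l)) + G.dist (g (n :: l)) (g l) :=
        hc.dist_triangle
      have t4 : G.dist (g (n :: l)) (g l) ≤ 1 := by
        simpa using G.dist_le hxy.symm.toWalk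
      have t5 : G.dist r (g l) ≠ G.dist r (g (n :: l)) := dist_ne_of_adj hT r hxy
      have t6 : ¬ (G.dist r (g (n :: l)) + 1 = G.dist r (g l)) := by
        intro hcon
        exact hne n l (ih2 _ hxy hcon)
      have hkey : G.dist r (g (n :: l)) = l.length + 1 := by omega
      refine ⟨by simpa using hkey, ?_⟩
      intro u hu hdist
      rw [hpar_cons]
      refine parent_unique hT r hu hxy.symm hdist ?_
      omega
  have hinj : ∀ a b : List ℕ, g a = g b → a = b := by
    intro a
    induction a with
    | nil =>
      intro b hb
      cases b with
      | nil => rfl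
      | cons n l =>
        exfalso
        have h1 := (hGood []).1
        have h2 := (hGood (n :: l)).1
        rw [hb, h2] at h1
        simp at h1
    | cons m k ih =>
      intro b hb
      cases b with
      | nil =>
        exfalso
        have h1 := (hGood (m :: k)).1
        have h2 := (hGood []).1
        rw [hb, h2] at h1
        simp at h1
      | cons n l =>
        have h1 := (hGood (m :: k)).1
        have h2 := (hGood (n :: l)).1
        have hgk := (hGood k).1
        have hgl := (hGood l).1
        have hbd : G.dist r (g (n :: l)) = G.dist r (g (m :: k)) := by rw [hb]
        have hlen : l.length = k.length := by
          have h := hbd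
          rw [h1, h2] at h
          simp at h
          omega
        have d1 : G.dist r (g k) + 1 = G.dist r (g (m :: k)) := by
          rw [hgk, h1]; simp
        have d2 : G.dist r (g l) + 1 = G.dist r (g (m :: k)) := by
          rw [hgl, h1]; simp [hlen]
        have hkl : g k = g l :=
          parent_unique hT r (hadj m k).symm (by rw [hb]; exact (hadj n l).symm) d1 d2
        have hkl' : k = l := ih l hkl
        subst hkl'
        have hcoe : ((e (g k) (par k) m : V)) = ((e (g k) (par k) n : V)) := by
          rw [← hgc, ← hgc]; exact hb
        have := (e (g k) (par k)).injective (Subtype.coe_injective hcoe)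
        rw [this]
  have hclosed : ∀ (l : List ℕ) (u : V), G.Adj (g l) u → ∃ a, g a = u := by
    intro l u hu
    by_cases hup : u = par l
    · cases l with
      | nil => exact ⟨[], by rw [hup, hpar_nil, hg_nil]⟩
      | cons n l' => exact ⟨l', by rw [hup, hpar_cons]⟩
    · have hmem' : u ∈ childSet G (g l) (par l) := ⟨hu, hup⟩
      refine ⟨(e (g l) (par l)).symm ⟨u, hmem'⟩ :: l, ?_⟩
      rw [hgc, Equiv.apply_symm_apply]
  have hsurj : Function.Surjective g := by
    intro x
    have H : ∀ (y z : V) (w : G.Walk y z), (∃ a, g a = y) → ∃ a, g a = z := by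
      intro y z w
      induction w with
      | nil => exact id
      | @cons y' v' z' h w ih =>
        rintro ⟨a, ha⟩
        exact ih (hclosed a v' (ha ▸ h))
    exact H r x (hc.preconnected r x).some ⟨[], hg_nil⟩
  have hrefl : ∀ a b : List ℕ, G.Adj (g a) (g b) → canonT.Adj a b := by
    intro a b hab
    by_cases hbp : g b = par a
    · cases a with
      | nil =>
        exfalso
        rw [hpar_nil, ← hg_nil] at hbp
        have := hinj b [] hbp
        subst this
        exact hab.ne rfl
      | cons n a' =>
        have hba : b = a' := hinj b a' (by rw [hbp, hpar_cons])
        subst hba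
        exact canonT_adj.mpr (Or.inr ⟨n, rfl⟩)
    · have hmem' : g b ∈ childSet G (g a) (par a) := ⟨hab, hbp⟩
      have hgb : g ((e (g a) (par a)).symm ⟨g b, hmem'⟩ :: a) = g b := by
        rw [hgc, Equiv.apply_symm_apply]
      have hba := hinj b _ hgb.symm
      exact canonT_adj.mpr (Or.inl ⟨_, hba⟩)
  have hfwd : ∀ a b : List ℕ, canonT.Adj a b → G.Adj (g a) (g b) := by
    intro a b hab
    rcases canonT_adj.mp hab with ⟨n, rfl⟩ | ⟨n, rfl⟩
    · exact hadj n a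
    · exact (hadj n b).symm
  refine ⟨⟨Equiv.ofBijective g ⟨fun a b h => hinj a b h, hsurj⟩, ?_⟩, rfl⟩
  intro a b
  exact ⟨hrefl a b, hfwd a b⟩

/-- Transport an induced-subgraph-on-a-complement along an isomorphism. -/
def isoInduceCompl {α β : Type} {A : SimpleGraph α} {B : SimpleGraph β} (φ : A ≃g B)
    (v : α) : A.induce ({v}ᶜ : Set α) ≃g B.induce ({φ v}ᶜ : Set β) where
  toEquiv := φ.toEquiv.subtypeEquiv (fun a => by
    simp only [Set.mem_compl_iff, Set.mem_singleton_iff]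
    exact not_congr (Equiv.apply_eq_iff_eq _).symm)
  map_rel_iff' := by
    intro a b
    exact φ.map_rel_iff

lemma append_singleton_cons_iff {s t : List ℕ} {m n : ℕ} :
    (∃ k, s ++ [m] = k :: (t ++ [n])) ↔ m = n ∧ ∃ k, s = k :: t := by
  constructor
  · rintro ⟨k, hk⟩
    rw [show k :: (t ++ [n]) = (k :: t) ++ [n] from rfl] at hk
    have hlen : s.length = (k :: t).length := by
      have := congrArg List.length hk
      simp at this
      simpa using this
    obtain ⟨h1, h2⟩ := List.append_inj hk hlen
    exact ⟨by simpa using h2, k, h1⟩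
  · rintro ⟨rfl, k, rfl⟩
    exact ⟨k, by simp⟩

def peelEquiv : ℕ × List ℕ ≃ ({([] : List ℕ)}ᶜ : Set (List ℕ)) where
  toFun p := ⟨p.2 ++ [p.1], by simp⟩
  invFun l := (l.1.getLast (Set.mem_compl_singleton_iff.mp l.2), l.1.dropLast)
  left_inv p := by simp
  right_inv l := Subtype.ext (by simpa using List.dropLast_append_getLast (Set.mem_compl_singleton_iff.mp l.2))

def canonPeel : countableCopies canonT ≃g canonT.induce ({([] : List ℕ)}ᶜ : Set (List ℕ)) where
  toEquiv := peelEquiv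
  map_rel_iff' := by
    rintro ⟨n, t⟩ ⟨m, s⟩
    show canonT.Adj (t ++ [n]) (s ++ [m]) ↔ _
    rw [canonT_adj, countableCopies_adj, append_singleton_cons_iff,
      append_singleton_cons_iff, canonT_adj]
    constructor
    · rintro (⟨rfl, h⟩ | ⟨rfl, h⟩)
      exacts [⟨rfl, Or.inl h⟩, ⟨rfl, Or.inr h⟩]
    · rintro ⟨rfl, h | h⟩
      exacts [Or.inl ⟨rfl, h⟩, Or.inr ⟨rfl, h⟩]

def copiesCongr {α β : Type} {A : SimpleGraph α} {B : SimpleGraph β} (φ : A ≃g B) :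
    countableCopies A ≃g countableCopies B where
  toEquiv := Equiv.prodCongr (Equiv.refl ℕ) φ.toEquiv
  map_rel_iff' := by
    rintro ⟨n, a⟩ ⟨m, b⟩
    show (n = m ∧ B.Adj (φ a) (φ b)) ↔ (n = m ∧ A.Adj a b)
    rw [φ.map_rel_iff]

def sumCongrIso {α β γ δ : Type} {A : SimpleGraph α} {B : SimpleGraph β} {C : SimpleGraph γ}
    {D : SimpleGraph δ} (φ : A ≃g B) (ψ : C ≃g D) : A ⊕g C ≃g B ⊕g D where
  toEquiv := Equiv.sumCongr φ.toEquiv ψ.toEquiv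
  map_rel_iff' := by
    rintro (a | a) (b | b) <;> simp [φ.map_rel_iff, ψ.map_rel_iff]

def sumDeleteInlFun {α β : Type} (v : α) :
    (({v}ᶜ : Set α) ⊕ β) → ({Sum.inl v}ᶜ : Set (α ⊕ β)) :=
  Sum.elim
    (fun a => ⟨Sum.inl a.1, by
      simp only [Set.mem_compl_singleton_iff, ne_eq, Sum.inl.injEq]
      exact Set.mem_compl_singleton_iff.mp a.2⟩)
    (fun b => ⟨Sum.inr b, by simp⟩)

lemma sumDeleteInlFun_bij {α β : Type} (v : α) : Function.Bijective (sumDeleteInlFun (β := β) v) := by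
  constructor
  · rintro (a | b) (a' | b') h <;> simp [sumDeleteInlFun, Subtype.ext_iff] at h <;> simp [h]
    exact Subtype.ext h
  · rintro ⟨(a | b), hx⟩
    · exact ⟨Sum.inl ⟨a, by simpa using hx⟩, rfl⟩
    · exact ⟨Sum.inr b, rfl⟩

noncomputable def sumDeleteInl {α β : Type} (A : SimpleGraph α) (B : SimpleGraph β) (v : α) :
    ((A.induce ({v}ᶜ : Set α)) ⊕g B) ≃g (A ⊕g B).induce ({Sum.inl v}ᶜ : Set (α ⊕ β)) where
  toEquiv := Equiv.ofBijective _ (sumDeleteInlFun_bij v)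
  map_rel_iff' := by
    rintro (a | b) (a' | b') <;>
      simp [Equiv.ofBijective, sumDeleteInlFun, SimpleGraph.induce, comap_adj]

def shiftEquiv' {V : Type} : (ℕ × V) ⊕ V ≃ ℕ × V where
  toFun := Sum.elim (fun p => (p.1 + 1, p.2)) (fun v => (0, v))
  invFun p := match p with
    | (0, v) => Sum.inr v
    | (n+1, v) => Sum.inl (n, v)
  left_inv := by rintro (⟨n, v⟩ | v) <;> rfl
  right_inv := by rintro ⟨(_ | n), v⟩ <;> rfl

def absorb {V : Type} (G : SimpleGraph V) : (countableCopies G ⊕g G) ≃g countableCopies G where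
  toEquiv := shiftEquiv'
  map_rel_iff' := by
    rintro (⟨n, a⟩ | a) (⟨m, b⟩ | b) <;>
      simp [shiftEquiv', countableCopies_adj]


/-- Let `G` be the tree in which every vertex has countably infinite degree. Then for
every vertex `v`, the induced subgraph `G − v` is isomorphic to the disjoint union of
countably infinitely many copies of `G`; likewise, for every vertex `w` of the disjoint
union `H = G ⊔ G`, the induced subgraph `H − w` is isomorphic to the disjoint union of
countably infinitely many copies of `G`. -/
theorem deleteVertex_iso_countableCopies_of_aleph0_regular_tree
    {V : Type} (G : SimpleGraph V) (hT : G.IsTree)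
    (hdeg : ∀ v : V, Cardinal.mk ↥(G.neighborSet v) = Cardinal.aleph0) :
    (∀ v : V, Nonempty ((G.induce ({v}ᶜ : Set V)) ≃g countableCopies G)) ∧
    (∀ w : V ⊕ V,
      Nonempty (((G ⊕g G).induce ({w}ᶜ : Set (V ⊕ V))) ≃g countableCopies G)) := by
  classical
  have part1 : ∀ v : V, Nonempty ((G.induce ({v}ᶜ : Set V)) ≃g countableCopies G) := by
    intro v
    obtain ⟨f, hf⟩ := exists_rooted_iso hT hdeg v
    have i1 := isoInduceCompl f ([] : List ℕ)
    rw [hf] at i1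
    exact ⟨(i1.symm.trans canonPeel.symm).trans (copiesCongr f)⟩
  refine ⟨part1, ?_⟩
  have pinl : ∀ v : V,
      Nonempty (((G ⊕g G).induce ({Sum.inl v}ᶜ : Set (V ⊕ V))) ≃g countableCopies G) := by
    intro v
    obtain ⟨p1⟩ := part1 v
    exact ⟨((sumDeleteInl G G v).symm.trans
      (sumCongrIso p1 (RelIso.refl G.Adj))).trans (absorb G)⟩
  intro w
  cases w with
  | inl v => exact pinl v
  | inr v =>
    obtain ⟨p⟩ := pinl v
    have i2 := isoInduceCompl (Iso.sumComm : G ⊕g G ≃g G ⊕g G) (Sum.inr v)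
    have hsw : (Iso.sumComm : G ⊕g G ≃g G ⊕g G) (Sum.inr v) = Sum.inl v := rfl
    rw [hsw] at i2
    exact ⟨i2.trans p⟩
end
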